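/- arXiv:1005.3870 — 6 statements merged into one kernel-verified Lean document; each statement's English description precedes it below -/
import Mathlib

section
/- Let R be the ring of noncommutative formal power series in variables X₁,…,Xₙ over ℝ (or ℤ). The Magnus expansion μ : Fₙ → R×, the homomorphism from the free group on x₁,…,xₙ determined by μ(xᵢ) = 1 + Xᵢ (with μ(xᵢ⁻¹) = 1 - Xᵢ + Xᵢ² - ⋯), is injective. -/
noncomputable section

/-- The algebra of noncommutative formal power series in variables `X 0, …, X (n-1)`
over `R`: a series is given by its coefficients, indexed by noncommutative
monomials, i.e. words in the `n` variables. -/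
def NCSeries (n : ℕ) (R : Type*) := List (Fin n) → R

namespace NCSeries

variable {n : ℕ} {R : Type*} [CommRing R]

instance : AddCommGroup (NCSeries n R) := Pi.addCommGroup
instance : Module R (NCSeries n R) := Pi.module _ _ _

instance : One (NCSeries n R) := ⟨fun w => if w = [] then 1 else 0⟩

/-- Cauchy/convolution product of noncommutative power series. -/
instance : Mul (NCSeries n R) :=
  ⟨fun f g w => ∑ i ∈ Finset.range (w.length + 1), f (w.take i) * g (w.drop i)⟩

theorem mul_def (f g : NCSeries n R) (w : List (Fin n)) :
    (f * g) w = ∑ i ∈ Finset.range (w.length + 1), f (w.take i) * g (w.drop i) := rfl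

theorem one_def (w : List (Fin n)) : (1 : NCSeries n R) w = if w = [] then 1 else 0 := rfl

theorem add_def (f g : NCSeries n R) (w : List (Fin n)) : (f + g) w = f w + g w := rfl

private theorem one_mul' (f : NCSeries n R) : 1 * f = f := by
  funext w
  rw [mul_def]
  rw [Finset.sum_eq_single_of_mem 0 (Finset.mem_range.2 (Nat.succ_pos _))]
  · simp [one_def]
  · intro b hb hb0
    have : w.take b ≠ [] := by
      intro hcon
      rcases List.take_eq_nil_iff.1 hcon with rfl | rfl
      · exact hb0 rfl
      · simp only [List.length_nil, Nat.succ_eq_add_one, Finset.mem_range] at hb; omega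
    rw [one_def, if_neg this, zero_mul]

private theorem mul_one' (f : NCSeries n R) : f * 1 = f := by
  funext w
  rw [mul_def]
  rw [Finset.sum_eq_single_of_mem w.length (Finset.mem_range.2 (Nat.lt_succ_self _))]
  · simp [one_def]
  · intro b hb hb0
    have : w.drop b ≠ [] := by
      intro hcon
      rw [List.drop_eq_nil_iff] at hcon
      simp only [Nat.succ_eq_add_one, Finset.mem_range] at hb; omega
    rw [one_def, if_neg this, mul_zero]

private theorem key_reindex (L : ℕ) (T : ℕ → ℕ → R) :
    ∑ i ∈ Finset.range (L + 1), ∑ j ∈ Finset.range (i + 1), T j (i - j) =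
      ∑ j ∈ Finset.range (L + 1), ∑ m ∈ Finset.range (L - j + 1), T j m := by
  rw [Finset.sum_sigma', Finset.sum_sigma']
  refine Finset.sum_nbij' (fun p => (⟨p.2, p.1 - p.2⟩ : Σ _ : ℕ, ℕ))
    (fun p => (⟨p.1 + p.2, p.1⟩ : Σ _ : ℕ, ℕ)) ?_ ?_ ?_ ?_ ?_
  · rintro ⟨i, j⟩ h
    simp only [Finset.mem_sigma, Finset.mem_range] at h ⊢
    omega
  · rintro ⟨j, m⟩ h
    simp only [Finset.mem_sigma, Finset.mem_range] at h ⊢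
    omega
  · rintro ⟨i, j⟩ h
    simp only [Finset.mem_sigma, Finset.mem_range] at h
    simp only [Sigma.mk.inj_iff]
    exact ⟨by omega, HEq.rfl⟩
  · rintro ⟨j, m⟩ h
    simp only [Finset.mem_sigma, Finset.mem_range] at h
    have hm : j + m - j = m := by omega
    simp [Sigma.mk.inj_iff, hm]
  · rintro ⟨i, j⟩ h
    rfl

private theorem mul_assoc' (f g h : NCSeries n R) : f * g * h = f * (g * h) := by
  funext w
  rw [mul_def (f * g) h, mul_def f (g * h)]
  have step1 : ∑ i ∈ Finset.range (w.length + 1), (f * g) (w.take i) * h (w.drop i) =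
      ∑ i ∈ Finset.range (w.length + 1), ∑ j ∈ Finset.range (i + 1),
        f (w.take j) * (g ((w.drop j).take (i - j)) * h ((w.drop j).drop (i - j))) := by
    refine Finset.sum_congr rfl ?_
    intro i hi
    rw [Finset.mem_range] at hi
    rw [mul_def, Finset.sum_mul]
    have hlen : (w.take i).length = i := by
      rw [List.length_take]; omega
    rw [hlen]
    refine Finset.sum_congr rfl ?_
    intro j hj
    rw [Finset.mem_range] at hj
    rw [List.take_take, min_eq_left (by omega : j ≤ i), List.drop_take,
      List.drop_drop]
    have : j + (i - j) = i := by omega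
    rw [this, mul_assoc]
  have step2 : ∑ j ∈ Finset.range (w.length + 1), f (w.take j) * (g * h) (w.drop j) =
      ∑ j ∈ Finset.range (w.length + 1), ∑ m ∈ Finset.range (w.length - j + 1),
        f (w.take j) * (g ((w.drop j).take m) * h ((w.drop j).drop m)) := by
    refine Finset.sum_congr rfl ?_
    intro j hj
    rw [Finset.mem_range] at hj
    rw [mul_def, Finset.mul_sum, List.length_drop]
  rw [step1, step2,
    key_reindex w.length
      (fun j m => f (w.take j) * (g ((w.drop j).take m) * h ((w.drop j).drop m)))]

instance instRing : Ring (NCSeries n R) :=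
  { (inferInstance : AddCommGroup (NCSeries n R)),
    (inferInstance : One (NCSeries n R)),
    (inferInstance : Mul (NCSeries n R)) with
    mul_assoc := mul_assoc'
    one_mul := one_mul'
    mul_one := mul_one'
    left_distrib := by
      intro a b c
      funext w
      simp only [mul_def, add_def, mul_add, Finset.sum_add_distrib]
    right_distrib := by
      intro a b c
      funext w
      simp only [mul_def, add_def, add_mul, Finset.sum_add_distrib]
    zero_mul := by
      intro a
      funext w
      simp only [mul_def]
      simp [show ∀ u, (0 : NCSeries n R) u = 0 from fun _ => rfl]
    mul_zero := by
      intro a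
      funext w
      simp only [mul_def]
      simp [show ∀ u, (0 : NCSeries n R) u = 0 from fun _ => rfl] }

/-- The variable `Xᵢ`, as a noncommutative power series. -/
def X (i : Fin n) : NCSeries n R := fun w => if w = [i] then 1 else 0

/-- The geometric series `∑ (-1)^k Xᵢ^k`, the inverse of `1 + Xᵢ`. -/
def geom (i : Fin n) : NCSeries n R :=
  fun w => if ∀ a ∈ w, a = i then (-1) ^ w.length else 0

theorem geom_nil (i : Fin n) : geom (R := R) i [] = 1 := by
  rw [geom, if_pos (by simp)]
  simp

theorem geom_cons_self (i : Fin n) (t : List (Fin n)) :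
    geom (R := R) i (i :: t) = -(geom i t) := by
  by_cases ht : ∀ a ∈ t, a = i
  · have h2 : ∀ a ∈ (i :: t), a = i := by
      intro a ha
      rcases List.mem_cons.1 ha with rfl | ha'
      · rfl
      · exact ht a ha'
    rw [geom, geom, if_pos h2, if_pos ht, List.length_cons, pow_succ]
    ring
  · have h2 : ¬ ∀ a ∈ (i :: t), a = i :=
      fun hc => ht fun a ha => hc a (List.mem_cons_of_mem _ ha)
    rw [geom, geom, if_neg h2, if_neg ht, neg_zero]

theorem geom_cons_ne {i a : Fin n} (t : List (Fin n)) (hai : a ≠ i) :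
    geom (R := R) i (a :: t) = 0 := by
  rw [geom, if_neg]
  intro hc
  exact hai (hc a (List.mem_cons_self))

theorem geom_concat_self (i : Fin n) (t : List (Fin n)) :
    geom (R := R) i (t ++ [i]) = -(geom i t) := by
  by_cases ht : ∀ a ∈ t, a = i
  · have h2 : ∀ a ∈ t ++ [i], a = i := by
      intro a ha
      rcases List.mem_append.1 ha with ha' | ha'
      · exact ht a ha'
      · simpa using ha'
    rw [geom, geom, if_pos h2, if_pos ht, List.length_append]
    simp [pow_succ]
  · have h2 : ¬ ∀ a ∈ t ++ [i], a = i :=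
      fun hc => ht fun a ha => hc a (List.mem_append_left _ ha)
    rw [geom, geom, if_neg h2, if_neg ht, neg_zero]

theorem geom_concat_ne {i a : Fin n} (t : List (Fin n)) (hai : a ≠ i) :
    geom (R := R) i (t ++ [a]) = 0 := by
  rw [geom, if_neg]
  intro hc
  exact hai (hc a (List.mem_append_right _ (by simp)))

theorem oneAddX_apply (i : Fin n) (w : List (Fin n)) :
    (1 + X i : NCSeries n R) w
      = (if w = [] then 1 else 0) + (if w = [i] then 1 else 0) := rfl

private theorem oneAddX_mul_geom (i : Fin n) :
    (1 + X i : NCSeries n R) * geom i = 1 := by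
  funext w
  cases w with
  | nil =>
    rw [mul_def]
    simp [oneAddX_apply, geom_nil, one_def]
  | cons a t =>
    rw [mul_def]
    simp only [List.length_cons]
    rw [Finset.sum_range_succ' _ (t.length + 1)]
    have h0 : (1 + X i : NCSeries n R) ((a :: t).take 0) * geom i ((a :: t).drop 0)
        = geom i (a :: t) := by
      simp [oneAddX_apply]
    rw [h0]
    have hrest : ∑ k ∈ Finset.range (t.length + 1),
        (1 + X i : NCSeries n R) ((a :: t).take (k + 1)) * geom i ((a :: t).drop (k + 1))
        = (if a = i then (1 : R) else 0) * geom i t := by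
      rw [Finset.sum_eq_single_of_mem 0 (Finset.mem_range.2 (Nat.succ_pos _))]
      · simp only [List.take_succ_cons, List.take_zero, List.drop_succ_cons, List.drop_zero]
        rw [oneAddX_apply]
        by_cases hai : a = i
        · subst hai; simp
        · simp [hai, List.cons_eq_cons]
      · intro b hb hb0
        rw [Finset.mem_range] at hb
        simp only [List.take_succ_cons, List.drop_succ_cons]
        have h1 : (a :: t.take b : List (Fin n)) ≠ [] := by simp
        have h2 : (a :: t.take b : List (Fin n)) ≠ [i] := by
          intro hcon
          rw [List.cons_eq_cons] at hcon
          have h3 : t.take b = [] := hcon.2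
          rcases List.take_eq_nil_iff.1 h3 with h4 | h4
          · exact hb0 h4
          · rw [h4] at hb; simp at hb; omega
        rw [oneAddX_apply, if_neg h1, if_neg h2, add_zero, zero_mul]
    rw [hrest, one_def, if_neg (by simp : ¬(a :: t : List (Fin n)) = [])]
    by_cases hai : a = i
    · subst hai
      rw [if_pos rfl, one_mul, geom_cons_self]
      ring
    · rw [if_neg hai, zero_mul, geom_cons_ne t hai, add_zero]

private theorem geom_mul_oneAddX (i : Fin n) :
    geom i * (1 + X i : NCSeries n R) = 1 := by
  funext w
  rcases List.eq_nil_or_concat w with rfl | ⟨t, a, rfl⟩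
  · rw [mul_def]
    simp [oneAddX_apply, geom_nil, one_def]
  · rw [List.concat_eq_append, mul_def]
    have hL : (t ++ [a]).length = t.length + 1 := by simp
    rw [hL, Finset.sum_range_succ, Finset.sum_range_succ]
    have hlast : geom i ((t ++ [a]).take (t.length + 1)) *
        (1 + X i : NCSeries n R) ((t ++ [a]).drop (t.length + 1)) = geom i (t ++ [a]) := by
      have h1 : (t ++ [a]).take (t.length + 1) = t ++ [a] := by
        rw [← hL, List.take_length]
      have h2 : (t ++ [a]).drop (t.length + 1) = [] := by
        rw [← hL, List.drop_length]
      rw [h1, h2, oneAddX_apply]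
      simp
    have hsnd : geom i ((t ++ [a]).take t.length) *
        (1 + X i : NCSeries n R) ((t ++ [a]).drop t.length)
        = geom i t * (if a = i then (1 : R) else 0) := by
      have h1 : (t ++ [a]).take t.length = t := by
        rw [List.take_left]
      have h2 : (t ++ [a]).drop t.length = [a] := by
        rw [List.drop_left]
      rw [h1, h2, oneAddX_apply]
      by_cases hai : a = i
      · subst hai; simp
      · simp [hai, List.cons_eq_cons]
    have hrest : ∑ k ∈ Finset.range t.length,
        geom i ((t ++ [a]).take k) * (1 + X i : NCSeries n R) ((t ++ [a]).drop k) = 0 := by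
      refine Finset.sum_eq_zero ?_
      intro k hk
      rw [Finset.mem_range] at hk
      have hlen : ((t ++ [a]).drop k).length = t.length + 1 - k := by
        rw [List.length_drop, hL]
      have h1 : (t ++ [a]).drop k ≠ [] := by
        intro hcon; rw [hcon] at hlen; simp at hlen; omega
      have h2 : (t ++ [a]).drop k ≠ [i] := by
        intro hcon; rw [hcon] at hlen; simp at hlen; omega
      rw [oneAddX_apply, if_neg h1, if_neg h2, add_zero, mul_zero]
    rw [hrest, hsnd, hlast, one_def, if_neg (by simp : ¬(t ++ [a] : List (Fin n)) = [])]
    by_cases hai : a = i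
    · subst hai
      rw [if_pos rfl, mul_one, geom_concat_self]
      ring
    · rw [if_neg hai, mul_zero, geom_concat_ne t hai]
      simp

/-- `1 + Xᵢ` as a unit of the power series ring, with inverse the geometric
series `1 - Xᵢ + Xᵢ² - ⋯`. -/
def magnusUnit (i : Fin n) : (NCSeries n R)ˣ :=
  ⟨1 + X i, geom i, oneAddX_mul_geom i, geom_mul_oneAddX i⟩

end NCSeries

/-- The Magnus expansion: the homomorphism from the free group on `n` generators
into the (multiplicative monoid of the) ring of noncommutative formal power
series, determined by `xᵢ ↦ 1 + Xᵢ`. -/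
def magnus (n : ℕ) (R : Type*) [CommRing R] : FreeGroup (Fin n) →* NCSeries n R :=
  (Units.coeHom (NCSeries n R)).comp (FreeGroup.lift NCSeries.magnusUnit)


namespace MagnusAux

open NCSeries List

variable {n : ℕ}

/-- A series is `i`-pure if it is supported on words all of whose letters are `i`. -/
def Pure (i : Fin n) (f : NCSeries n ℝ) : Prop :=
  ∀ w, f w ≠ 0 → ∀ a ∈ w, a = i

lemma pure_one (i : Fin n) : Pure i (1 : NCSeries n ℝ) := by
  intro w hw a ha
  rw [one_def] at hw
  split at hw
  · subst ‹w = []›; simp at ha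
  · exact absurd rfl hw

lemma pure_oneAddX (i : Fin n) : Pure i (1 + X i : NCSeries n ℝ) := by
  intro w hw a ha
  rw [oneAddX_apply] at hw
  by_cases h1 : w = []
  · subst h1; simp at ha
  by_cases h2 : w = [i]
  · subst h2; simpa using ha
  · rw [if_neg h1, if_neg h2, add_zero] at hw; exact absurd rfl hw

lemma pure_geom (i : Fin n) : Pure i (geom i : NCSeries n ℝ) := by
  intro w hw a ha
  rw [geom] at hw
  by_cases h : ∀ b ∈ w, b = i
  · exact h a ha
  · rw [if_neg h] at hw; exact absurd rfl hw

lemma mul_apply_nil (f g : NCSeries n ℝ) : (f * g) [] = f [] * g [] := by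
  rw [mul_def]; simp

lemma mul_apply_single (f g : NCSeries n ℝ) (i : Fin n) :
    (f * g) [i] = f [] * g [i] + f [i] * g [] := by
  rw [mul_def]
  show ∑ s ∈ Finset.range 2, _ = _
  rw [Finset.sum_range_succ, Finset.sum_range_one]
  simp

lemma Pure.mul {i : Fin n} {f g : NCSeries n ℝ} (hf : Pure i f) (hg : Pure i g) :
    Pure i (f * g) := by
  intro w hw a ha
  rw [mul_def] at hw
  obtain ⟨s, _, hterm⟩ := Finset.exists_ne_zero_of_sum_ne_zero hw
  have h1 : f (w.take s) ≠ 0 := left_ne_zero_of_mul hterm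
  have h2 : g (w.drop s) ≠ 0 := right_ne_zero_of_mul hterm
  rw [← List.take_append_drop s w] at ha
  rcases List.mem_append.1 ha with h | h
  · exact hf _ h1 a h
  · exact hg _ h2 a h

/-- `1 + Xᵢ` as a unit, over ℝ. -/
abbrev U (i : Fin n) : (NCSeries n ℝ)ˣ := NCSeries.magnusUnit i

lemma zpow_spec (i : Fin n) (e : ℤ) :
    Pure i ((U i ^ e : (NCSeries n ℝ)ˣ) : NCSeries n ℝ) ∧
    ((U i ^ e : (NCSeries n ℝ)ˣ) : NCSeries n ℝ) [] = 1 ∧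
    ((U i ^ e : (NCSeries n ℝ)ˣ) : NCSeries n ℝ) [i] = (e : ℝ) := by
  have hUval : ((U i : (NCSeries n ℝ)ˣ) : NCSeries n ℝ) = 1 + X i := rfl
  have hUinv : (((U i)⁻¹ : (NCSeries n ℝ)ˣ) : NCSeries n ℝ) = geom i := rfl
  have hXnil : (1 + X i : NCSeries n ℝ) [] = 1 := by rw [oneAddX_apply]; simp
  have hXi : (1 + X i : NCSeries n ℝ) [i] = 1 := by
    rw [oneAddX_apply]; simp
  have hgeomi : (geom i : NCSeries n ℝ) [i] = -1 := by
    have := geom_cons_self (R := ℝ) i []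
    rw [this, geom_nil]
  induction e using Int.induction_on with
  | zero =>
    refine ⟨by rw [zpow_zero, Units.val_one]; exact pure_one i, ?_, ?_⟩
    · rw [zpow_zero, Units.val_one, one_def]; simp
    · rw [zpow_zero, Units.val_one, one_def]; simp
  | succ k ih =>
    obtain ⟨hp, h0, h1⟩ := ih
    have heq : (U i ^ ((k : ℤ) + 1) : (NCSeries n ℝ)ˣ) = U i ^ (k : ℤ) * U i := by
      rw [zpow_add_one]
    rw [heq, Units.val_mul]
    refine ⟨hp.mul (by rw [hUval]; exact pure_oneAddX i), ?_, ?_⟩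
    · rw [mul_apply_nil, h0, hUval, hXnil, mul_one]
    · rw [mul_apply_single, h0, h1, hUval, hXnil, hXi]
      push_cast; ring
  | pred k ih =>
    obtain ⟨hp, h0, h1⟩ := ih
    have heq : (U i ^ (-(k : ℤ) - 1) : (NCSeries n ℝ)ˣ) = U i ^ (-(k : ℤ)) * (U i)⁻¹ := by
      rw [zpow_sub_one]
    rw [heq, Units.val_mul]
    refine ⟨hp.mul (by rw [hUinv]; exact pure_geom i), ?_, ?_⟩
    · rw [mul_apply_nil, h0, hUinv, geom_nil, mul_one]
    · rw [mul_apply_single, h0, h1, hUinv, geom_nil, hgeomi]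
      push_cast; ring

/-- The series attached to a block `(i, e)`: `(1 + Xᵢ)^e`. -/
def F : Fin n × ℤ → NCSeries n ℝ := fun p => ((U p.1 ^ p.2 : (NCSeries n ℝ)ˣ) : NCSeries n ℝ)

lemma F_pure (p : Fin n × ℤ) : Pure p.1 (F p) := (zpow_spec p.1 p.2).1

lemma F_nil (p : Fin n × ℤ) : F p [] = 1 := (zpow_spec p.1 p.2).2.1

lemma F_single (p : Fin n × ℤ) : F p [p.1] = (p.2 : ℝ) := (zpow_spec p.1 p.2).2.2

/-- A product of block series vanishes on any square-free word longer than the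
number of blocks, since each block contributes at most one letter. -/
lemma prod_apply_eq_zero : ∀ (bs : List (Fin n × ℤ)) (u : List (Fin n)),
    Chain' (· ≠ ·) u → bs.length < u.length → ((bs.map F).prod) u = 0
  | [], u, _, hlen => by
    rw [List.map_nil, List.prod_nil, one_def, if_neg]
    intro h; subst h; simp at hlen
  | p :: bs, u, hu, hlen => by
    rw [List.map_cons, List.prod_cons, mul_def]
    refine Finset.sum_eq_zero fun s hs => ?_
    rw [Finset.mem_range] at hs
    by_cases hf : F p (u.take s) = 0
    · rw [hf, zero_mul]
    have hall : ∀ a ∈ u.take s, a = p.1 := F_pure p _ hf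
    have hslen : s ≤ u.length := by omega
    have hs1 : s ≤ 1 := by
      by_contra hcon
      push_neg at hcon
      have hl2 : 2 ≤ (u.take s).length := by
        rw [List.length_take]
        simp only [List.length_cons] at hlen
        omega
      rcases h : u.take s with _ | ⟨a, _ | ⟨b, t⟩⟩ <;> rw [h] at hl2 <;>
        simp at hl2
      have hch : Chain' (· ≠ ·) (a :: b :: t) := h ▸ hu.take s
      have hab : a ≠ b := (List.isChain_cons_cons.1 hch).1
      have ha : a = p.1 := hall a (by rw [h]; simp)
      have hb : b = p.1 := hall b (by rw [h]; simp)
      exact hab (ha.trans hb.symm)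
    have : ((bs.map F).prod) (u.drop s) = 0 := by
      refine prod_apply_eq_zero bs _ (hu.drop s) ?_
      rw [List.length_drop]
      simp only [List.length_cons] at hlen
      omega
    rw [this, mul_zero]

/-- The coefficient of the product of block series at the word of block
generators is the product of the block exponents. -/
lemma prod_apply_gens : ∀ bs : List (Fin n × ℤ),
    Chain' (fun p q : Fin n × ℤ => p.1 ≠ q.1) bs →
    ((bs.map F).prod) (bs.map Prod.fst) = (bs.map fun p => (p.2 : ℝ)).prod
  | [], _ => by
    rw [List.map_nil, List.prod_nil, List.map_nil, List.map_nil, List.prod_nil, one_def]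
    simp
  | p :: bs, hchain => by
    rw [List.map_cons, List.prod_cons, List.map_cons, mul_def]
    have hlen : (p.1 :: bs.map Prod.fst : List (Fin n)).length = bs.length + 1 := by simp
    rw [hlen]
    rw [Finset.sum_eq_single_of_mem 1 (Finset.mem_range.2 (by omega))]
    · simp only [List.take_succ_cons, List.take_zero, List.drop_succ_cons, List.drop_zero]
      rw [F_single, prod_apply_gens bs (List.isChain_cons.1 hchain).2,
        List.map_cons, List.prod_cons]
    · intro s hs hs1
      rw [Finset.mem_range] at hs
      match s, hs1 with
      | 0, _ =>
        rw [List.take_zero, List.drop_zero, F_nil, one_mul]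
        refine prod_apply_eq_zero bs _ ?_ (by simp)
        have : Chain' (fun a b : Fin n => a ≠ b) ((p :: bs).map Prod.fst) :=
          (List.isChain_map Prod.fst).2 hchain
        simpa using this
      | (m + 2), _ =>
        have hbs : bs.length ≥ 1 := by omega
        obtain ⟨q, bs', rfl⟩ : ∃ q bs', bs = q :: bs' := by
          cases bs with
          | nil => simp at hbs
          | cons q bs' => exact ⟨q, bs', rfl⟩
        have hne : p.1 ≠ q.1 := (List.isChain_cons_cons.1 hchain).1
        have hmem : q.1 ∈ (p.1 :: (q :: bs').map Prod.fst : List (Fin n)).take (m + 2) := by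
          simp [List.take_succ_cons]
        by_contra hcon
        have hF : F p ((p.1 :: (q :: bs').map Prod.fst : List (Fin n)).take (m + 2)) ≠ 0 := by
          intro h0; rw [h0, zero_mul] at hcon; exact hcon rfl
        exact hne ((F_pure p _ hF q.1 hmem).symm)

/-- `±1` according to the sign bit. -/
def ε (b : Bool) : ℤ := cond b 1 (-1)

/-- Collect a word of the free group into blocks of consecutive equal generators,
with exponents. -/
def blocks : List (Fin n × Bool) → List (Fin n × ℤ)
  | [] => []
  | (i, b) :: t =>
    match blocks t with
    | [] => [(i, ε b)]
    | (j, e) :: bs => if j = i then (i, ε b + e) :: bs else (i, ε b) :: (j, e) :: bs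

lemma blocks_prod : ∀ ℓ : List (Fin n × Bool),
    ((blocks ℓ).map (fun p => U p.1 ^ p.2)).prod
      = (ℓ.map (fun p => U p.1 ^ ε p.2)).prod
  | [] => rfl
  | (i, b) :: t => by
    rw [List.map_cons, List.prod_cons, ← blocks_prod t]
    show ((blocks ((i, b) :: t)).map (fun p => U p.1 ^ p.2)).prod = _
    rcases h : blocks t with _ | ⟨⟨j, e⟩, bs⟩
    · rw [show blocks ((i, b) :: t) = [(i, ε b)] by rw [blocks, h]]
      simp
    · rw [show blocks ((i, b) :: t)
          = if j = i then (i, ε b + e) :: bs else (i, ε b) :: (j, e) :: bs by rw [blocks, h]]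
      split_ifs with hji
      · subst hji
        simp only [List.map_cons, List.prod_cons]
        rw [zpow_add, mul_assoc]
      · simp only [List.map_cons, List.prod_cons]

lemma blocks_spec : ∀ ℓ : List (Fin n × Bool),
    Chain' (fun p q : Fin n × Bool => p.1 = q.1 → p.2 = q.2) ℓ →
    Chain' (fun p q : Fin n × ℤ => p.1 ≠ q.1) (blocks ℓ) ∧
    (∀ p ∈ blocks ℓ, p.2 ≠ 0) ∧
    ∀ i b t, ℓ = (i, b) :: t →
      ∃ e bs, blocks ℓ = (i, e) :: bs ∧ (b = true → 0 < e) ∧ (b = false → e < 0)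
  | [], _ => ⟨List.isChain_nil, by simp [blocks], fun i b t h => by simp at h⟩
  | (i, b) :: t, hchain => by
    have htail : Chain' (fun p q : Fin n × Bool => p.1 = q.1 → p.2 = q.2) t :=
      (List.isChain_cons.1 hchain).2
    obtain ⟨ihc, ihnz, ihhd⟩ := blocks_spec t htail
    cases t with
    | nil =>
      have hb : blocks ((i, b) :: ([] : List (Fin n × Bool))) = [(i, ε b)] := rfl
      refine ⟨by rw [hb]; exact List.isChain_singleton _, ?_, ?_⟩
      · rw [hb]
        intro p hp
        rw [List.mem_singleton] at hp
        subst hp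
        cases b <;> simp [ε]
      · intro i' b' t' h
        obtain ⟨h1, h2⟩ := List.cons_eq_cons.1 h
        injection h1 with hi hb'
        subst hi; subst hb'
        exact ⟨ε b, [], hb, fun hb' => by subst hb'; simp [ε], fun hb' => by subst hb'; simp [ε]⟩
    | cons q t' =>
      obtain ⟨j, c⟩ := q
      obtain ⟨e, bs, hbt, hpos, hneg⟩ := ihhd j c t' rfl
      have hrel : i = j → b = c := (List.isChain_cons_cons.1 hchain).1
      have hkey : blocks ((i, b) :: (j, c) :: t')
          = if j = i then (i, ε b + e) :: bs else (i, ε b) :: (j, e) :: bs := by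
        rw [blocks, hbt]
      have hmemnz : ∀ p ∈ (j, e) :: bs, p.2 ≠ 0 := by rw [← hbt]; exact ihnz
      have hchold : Chain' (fun p q : Fin n × ℤ => p.1 ≠ q.1) ((j, e) :: bs) := hbt ▸ ihc
      by_cases hji : j = i
      · subst hji
        have hbc : b = c := hrel rfl
        subst hbc
        rw [if_pos rfl] at hkey
        have hesign : (b = true → 0 < ε b + e) ∧ (b = false → ε b + e < 0) := by
          cases b
          · exact ⟨by simp, fun _ => by have := hneg rfl; simp [ε]; omega⟩
          · exact ⟨fun _ => by have := hpos rfl; simp [ε]; omega, by simp⟩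
        refine ⟨?_, ?_, ?_⟩
        · rw [hkey]
          refine List.isChain_cons.2 ⟨?_, (List.isChain_cons.1 hchold).2⟩
          intro y hy
          exact (List.isChain_cons.1 hchold).1 y hy
        · rw [hkey]
          intro p hp
          rcases List.mem_cons.1 hp with rfl | hp'
          · cases b
            · have := hneg rfl; simp only [ε]; simp; omega
            · have := hpos rfl; simp only [ε]; simp; omega
          · exact hmemnz p (List.mem_cons_of_mem _ hp')
        · intro i' b' t'' h
          obtain ⟨h1, _⟩ := List.cons_eq_cons.1 h
          injection h1 with hi hb'
          subst hi; subst hb'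
          exact ⟨ε b + e, bs, hkey, hesign.1, hesign.2⟩
      · rw [if_neg hji] at hkey
        refine ⟨?_, ?_, ?_⟩
        · rw [hkey]
          exact List.isChain_cons_cons.2 ⟨fun h => hji h.symm, hchold⟩
        · rw [hkey]
          intro p hp
          rcases List.mem_cons.1 hp with rfl | hp'
          · cases b <;> simp [ε]
          · exact hmemnz p hp'
        · intro i' b' t'' h
          obtain ⟨h1, _⟩ := List.cons_eq_cons.1 h
          injection h1 with hi hb'
          subst hi; subst hb'
          refine ⟨ε b, (j, e) :: bs, hkey, ?_, ?_⟩
          · intro hb'; subst hb'; simp [ε]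
          · intro hb'; subst hb'; simp [ε]

/-- If a list is not a `Chain'`, some adjacent pair violates the relation. -/
lemma exists_bad {α : Type*} {P : α → α → Prop} :
    ∀ (L : List α), ¬ Chain' P L → ∃ L₁ a b L₂, L = L₁ ++ a :: b :: L₂ ∧ ¬ P a b
  | [], h => absurd List.isChain_nil h
  | [x], h => absurd (List.isChain_singleton x) h
  | a :: b :: t, h => by
    change ¬ List.IsChain P (a :: b :: t) at h
    rw [List.isChain_cons_cons] at h
    by_cases hab : P a b
    · have : ¬ Chain' P (b :: t) := fun hc => h ⟨hab, hc⟩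
      obtain ⟨L₁, x, y, L₂, heq, hxy⟩ := exists_bad (b :: t) this
      exact ⟨a :: L₁, x, y, L₂, by rw [heq]; rfl, hxy⟩
    · exact ⟨[], a, b, t, rfl, hab⟩

/-- The reduced word of an element of the free group has no adjacent pair
`(i, b) (i, !b)`. -/
lemma toWord_chain' (w : FreeGroup (Fin n)) :
    Chain' (fun p q : Fin n × Bool => p.1 = q.1 → p.2 = q.2) w.toWord := by
  by_contra h
  obtain ⟨L₁, a, b, L₂, heq, hab⟩ := exists_bad _ h
  push_neg at hab
  obtain ⟨hfst, hsnd⟩ := hab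
  obtain ⟨x, u⟩ := a
  obtain ⟨y, v⟩ := b
  simp only at hfst hsnd
  subst hfst
  have hv : v = !u := by
    cases u <;> cases v <;> simp_all
  subst hv
  exact FreeGroup.reduce.not (L₂ := L₁) (L₃ := L₂) (x := x) (b := u)
    (by rw [FreeGroup.reduce_toWord, heq])

lemma letter_eq (p : Fin n × Bool) :
    (cond p.2 (NCSeries.magnusUnit (R := ℝ) p.1) (NCSeries.magnusUnit p.1)⁻¹)
      = U p.1 ^ ε p.2 := by
  obtain ⟨i, b⟩ := p
  cases b
  · show (U i)⁻¹ = U i ^ (-1 : ℤ); rw [zpow_neg_one]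
  · show U i = U i ^ (1 : ℤ); rw [zpow_one]

end MagnusAux

/-- The Magnus expansion `μ : Fₙ → ℝ⟨⟨X₁,…,Xₙ⟩⟩`, the
homomorphism from the free group on `n` generators determined by
`μ(xᵢ) = 1 + Xᵢ`, is injective. -/
theorem magnus_injective (n : ℕ) :
    (∀ i : Fin n, magnus n ℝ (FreeGroup.of i) = 1 + NCSeries.X i) ∧
    Function.Injective (magnus n ℝ) := by
  constructor
  · intro i
    show ((FreeGroup.lift NCSeries.magnusUnit (FreeGroup.of i) : (NCSeries n ℝ)ˣ)
        : NCSeries n ℝ) = _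
    rw [FreeGroup.lift_apply_of]
    rfl
  · rw [injective_iff_map_eq_one]
    intro w hw
    by_contra hne
    -- the reduced word of `w`
    set ℓ := w.toWord with hℓdef
    have hℓne : ℓ ≠ [] := fun h => hne (FreeGroup.toWord_eq_nil_iff.1 h)
    have hred := MagnusAux.toWord_chain' w
    obtain ⟨⟨i, b⟩, t, hℓ⟩ : ∃ p t, ℓ = p :: t := by
      cases h : ℓ with
      | nil => exact absurd h hℓne
      | cons p t => exact ⟨p, t, rfl⟩
    obtain ⟨hchain, hnz, hhead⟩ := MagnusAux.blocks_spec ℓ hred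
    obtain ⟨e, bs, hblocks, -, -⟩ := hhead i b t hℓ
    -- compute `magnus n ℝ w` as a product over blocks
    have hmag : magnus n ℝ w
        = (((MagnusAux.blocks ℓ).map MagnusAux.F).prod : NCSeries n ℝ) := by
      have h1 : magnus n ℝ w
          = ((FreeGroup.lift NCSeries.magnusUnit w : (NCSeries n ℝ)ˣ) : NCSeries n ℝ) := rfl
      have h2 : FreeGroup.lift NCSeries.magnusUnit w
          = (ℓ.map fun p => cond p.2 (NCSeries.magnusUnit (R := ℝ) p.1)
              (NCSeries.magnusUnit p.1)⁻¹).prod := by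
        conv_lhs => rw [← FreeGroup.mk_toWord (x := w)]
        exact FreeGroup.lift_mk
      have h3 : (ℓ.map fun p => cond p.2 (NCSeries.magnusUnit (R := ℝ) p.1)
              (NCSeries.magnusUnit p.1)⁻¹).prod
          = ((MagnusAux.blocks ℓ).map (fun p => MagnusAux.U p.1 ^ p.2)).prod := by
        rw [MagnusAux.blocks_prod]
        congr 1
        exact List.map_congr_left fun p _ => MagnusAux.letter_eq p
      rw [h1, h2, h3]
      have h4 := map_list_prod (Units.coeHom (NCSeries n ℝ))
        ((MagnusAux.blocks ℓ).map (fun p => MagnusAux.U p.1 ^ p.2))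
      rw [List.map_map] at h4
      exact h4
    -- evaluate at the word of block generators
    set u : List (Fin n) := (MagnusAux.blocks ℓ).map Prod.fst with hu
    have hval : (magnus n ℝ w) u
        = ((MagnusAux.blocks ℓ).map fun p => ((p.2 : ℤ) : ℝ)).prod := by
      rw [hmag]
      exact MagnusAux.prod_apply_gens _ hchain
    have hune : u ≠ [] := by
      rw [hu, hblocks]
      simp
    have h1u : (1 : NCSeries n ℝ) u = 0 := by rw [NCSeries.one_def, if_neg hune]
    rw [hw, h1u] at hval
    have : ((MagnusAux.blocks ℓ).map fun p => ((p.2 : ℤ) : ℝ)).prod ≠ 0 := by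
      refine List.prod_ne_zero ?_
      intro h0
      obtain ⟨p, hp, hp0⟩ := List.mem_map.1 h0
      exact hnz p hp (by exact_mod_cast hp0)
    exact this hval.symm

end
end

section
/- The Magnus ordering on the free group Fₙ, defined by a <_M b iff the first (in DegLex order on monomials) coefficient at which the Magnus expansions μ(a) and μ(b) differ is smaller in μ(a) than in μ(b), is a bi-invariant total order on Fₙ. -/
noncomputable section

/-- The DegLex ordering on noncommutative monomials (words): compare first by
degree (length), then lexicographically by the index sequence. -/
def NCDegLex {n : ℕ} (w w' : List (Fin n)) : Prop :=
  w.length < w'.length ∨ (w.length = w'.length ∧ List.Lex (· < ·) w w')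

/-- A bi-invariant total order (bi-ordering) on a group `G`. -/
def IsBiOrdering {G : Type*} [Group G] (r : G → G → Prop) : Prop :=
  IsStrictTotalOrder G r ∧ ∀ a b c : G, r a b → r (c * a) (c * b) ∧ r (a * c) (b * c)

/-- The Magnus ordering on the free group: `a <_M b` iff at the DegLex-first
monomial where the Magnus expansions `μ a` and `μ b` differ, the coefficient of
`μ a` is smaller than that of `μ b`. -/
def magnusLt {n : ℕ} (a b : FreeGroup (Fin n)) : Prop :=
  ∃ w : List (Fin n), magnus n ℤ a w < magnus n ℤ b w ∧
    ∀ w' : List (Fin n), NCDegLex w' w → magnus n ℤ a w' = magnus n ℤ b w'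


/-! ### Auxiliary development for the Magnus ordering -/

section DegLexAux

variable {n : ℕ}

/-- Encoding of words into ℕ, strictly monotone for DegLex. -/
def encW : List (Fin n) → ℕ
  | [] => 0
  | a :: t => (a.val + 1) * n ^ t.length + encW t

def gsum (n L : ℕ) : ℕ := ∑ j ∈ Finset.range L, n ^ j

theorem gsum_mono {L L' : ℕ} (h : L ≤ L') : gsum n L ≤ gsum n L' :=
  Finset.sum_le_sum_of_subset (Finset.range_subset_range.2 h)

theorem encW_lt (w : List (Fin n)) : encW w < gsum n (w.length + 1) := by
  induction w with
  | nil => simp [encW, gsum]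
  | cons a t ih =>
    have ha : a.val + 1 ≤ n := a.isLt
    have h1 : (a.val + 1) * n ^ t.length ≤ n ^ (t.length + 1) := by
      rw [pow_succ, mul_comm (n ^ t.length) n]
      exact Nat.mul_le_mul_right _ ha
    have h2 : gsum n (t.length + 1 + 1) = gsum n (t.length + 1) + n ^ (t.length + 1) := by
      simp [gsum, Finset.sum_range_succ]
    simp only [encW, List.length_cons]
    omega

theorem encW_ge (w : List (Fin n)) : gsum n w.length ≤ encW w := by
  induction w with
  | nil => simp [encW, gsum]
  | cons a t ih =>
    have h2 : gsum n (t.length + 1) = gsum n t.length + n ^ t.length := by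
      simp [gsum, Finset.sum_range_succ]
    have h3 : n ^ t.length ≤ (a.val + 1) * n ^ t.length :=
      Nat.le_mul_of_pos_left _ (Nat.succ_pos _)
    simp only [encW, List.length_cons]
    omega

theorem encW_lt_of_lex : ∀ {w w' : List (Fin n)}, List.Lex (· < ·) w w' →
    w.length = w'.length → encW w < encW w' := by
  intro w w' h
  induction h with
  | nil => intro h; simp at h
  | @cons a l₁ l₂ h ih =>
    intro hl
    simp only [List.length_cons, Nat.add_right_cancel_iff] at hl
    simp only [encW, hl]
    exact Nat.add_lt_add_left (ih hl) _
  | @rel a l₁ b l₂ hab =>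
    intro hl
    simp only [List.length_cons, Nat.add_right_cancel_iff] at hl
    simp only [encW, hl]
    have h1 : encW l₁ < gsum n (l₂.length + 1) := hl ▸ encW_lt l₁
    have h2 : gsum n l₂.length ≤ encW l₂ := encW_ge l₂
    have h3 : gsum n (l₂.length + 1) = gsum n l₂.length + n ^ l₂.length := by
      simp [gsum, Finset.sum_range_succ]
    have hab' : a.val + 1 ≤ b.val := hab
    have h4 : (a.val + 1 + 1) * n ^ l₂.length ≤ (b.val + 1) * n ^ l₂.length :=
      Nat.mul_le_mul_right _ (by omega)
    have h5 : (a.val + 1 + 1) * n ^ l₂.length = (a.val + 1) * n ^ l₂.length + n ^ l₂.length := by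
      ring
    omega

theorem encW_lt_of_degLex {w w' : List (Fin n)} (h : NCDegLex w w') : encW w < encW w' := by
  rcases h with h | ⟨hl, hlex⟩
  · calc encW w < gsum n (w.length + 1) := encW_lt w
      _ ≤ gsum n w'.length := gsum_mono h
      _ ≤ encW w' := encW_ge w'
  · exact encW_lt_of_lex hlex hl

theorem degLex_trans {w₁ w₂ w₃ : List (Fin n)} (h1 : NCDegLex w₁ w₂) (h2 : NCDegLex w₂ w₃) :
    NCDegLex w₁ w₃ := by
  rcases h1 with h1 | ⟨e1, l1⟩ <;> rcases h2 with h2 | ⟨e2, l2⟩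
  · exact Or.inl (h1.trans h2)
  · exact Or.inl (e2 ▸ h1)
  · exact Or.inl (e1 ▸ h2)
  · exact Or.inr ⟨e1.trans e2, List.lex_trans (fun h h' => lt_trans h h') l1 l2⟩

theorem degLex_of_length_lt {w w' : List (Fin n)} (h : w.length < w'.length) : NCDegLex w w' :=
  Or.inl h

theorem degLex_trichotomy (w w' : List (Fin n)) (h : w ≠ w') : NCDegLex w w' ∨ NCDegLex w' w := by
  rcases Nat.lt_trichotomy w.length w'.length with hl | hl | hl
  · exact Or.inl (Or.inl hl)
  · rcases trichotomous (r := List.Lex ((· < ·) : Fin n → Fin n → Prop)) w w' with ht | ht | ht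
    · exact Or.inl (Or.inr ⟨hl, ht⟩)
    · exact absurd ht h
    · exact Or.inr (Or.inr ⟨hl.symm, ht⟩)
  · exact Or.inr (Or.inl hl)

theorem degLex_exists_min {S : Set (List (Fin n))} (hS : S.Nonempty) :
    ∃ w ∈ S, ∀ w', NCDegLex w' w → w' ∉ S := by
  obtain ⟨w₀, hw₀⟩ := hS
  set T : Set ℕ := {k | ∃ w ∈ S, encW w = k} with hT
  have hTne : T.Nonempty := ⟨encW w₀, w₀, hw₀, rfl⟩
  obtain ⟨w, hwS, hwk⟩ := Nat.sInf_mem hTne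
  refine ⟨w, hwS, fun w' hlt hw' => ?_⟩
  have h1 : sInf T ≤ encW w' := Nat.sInf_le ⟨w', hw', rfl⟩
  have h2 := encW_lt_of_degLex hlt
  omega

end DegLexAux

namespace NCSeries

section CoeffAux

variable {n : ℕ}

theorem const_mul (f g : NCSeries n ℤ) : (f * g) [] = f [] * g [] := by
  rw [mul_def]; simp

theorem single_mul (i : Fin n) (f g : NCSeries n ℤ) :
    (f * g) [i] = f [] * g [i] + f [i] * g [] := by
  rw [mul_def]
  rw [show ([i] : List (Fin n)).length = 1 from rfl]
  rw [Finset.sum_range_succ, Finset.sum_range_one]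
  rfl

/-- `f` is supported on words all of whose letters are `i`. -/
def AllI (i : Fin n) (f : NCSeries n ℤ) : Prop :=
  ∀ w : List (Fin n), (∃ a ∈ w, a ≠ i) → f w = 0

theorem AllI.one (i : Fin n) : AllI i (1 : NCSeries n ℤ) := by
  rintro w ⟨a, ha, hai⟩
  rw [one_def, if_neg (List.ne_nil_of_mem ha)]

theorem AllI.mul {i : Fin n} {f g : NCSeries n ℤ} (hf : AllI i f) (hg : AllI i g) :
    AllI i (f * g) := by
  rintro w ⟨a, ha, hai⟩
  rw [mul_def]
  refine Finset.sum_eq_zero fun m _ => ?_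
  have hmem : a ∈ w.take m ++ w.drop m := by rw [List.take_append_drop]; exact ha
  rcases List.mem_append.1 hmem with h | h
  · rw [hf _ ⟨a, h, hai⟩, zero_mul]
  · rw [hg _ ⟨a, h, hai⟩, mul_zero]

theorem allI_oneAddX (i : Fin n) : AllI i ((1 + X i : NCSeries n ℤ)) := by
  rintro w ⟨a, ha, hai⟩
  rw [oneAddX_apply, if_neg (List.ne_nil_of_mem ha), if_neg, add_zero]
  rintro rfl
  simp at ha
  exact hai ha

theorem allI_geom (i : Fin n) : AllI i (geom i : NCSeries n ℤ) := by
  rintro w ⟨a, ha, hai⟩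
  rw [geom, if_neg]
  exact fun hc => hai (hc a ha)

theorem magnusUnit_inv_val (i : Fin n) :
    (((magnusUnit i)⁻¹ : (NCSeries n ℤ)ˣ) : NCSeries n ℤ) = geom i := rfl

theorem magnusUnit_val (i : Fin n) :
    ((magnusUnit i : (NCSeries n ℤ)ˣ) : NCSeries n ℤ) = 1 + X i := rfl

theorem magnusUnit_zpow (i : Fin n) (e : ℤ) :
    AllI i ((magnusUnit i ^ e : (NCSeries n ℤ)ˣ) : NCSeries n ℤ) ∧
    ((magnusUnit i ^ e : (NCSeries n ℤ)ˣ) : NCSeries n ℤ) [] = 1 ∧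
    ((magnusUnit i ^ e : (NCSeries n ℤ)ˣ) : NCSeries n ℤ) [i] = e := by
  have hu1 : ((magnusUnit i : (NCSeries n ℤ)ˣ) : NCSeries n ℤ) [] = 1 := by
    rw [magnusUnit_val, oneAddX_apply]; simp
  have hu2 : ((magnusUnit i : (NCSeries n ℤ)ˣ) : NCSeries n ℤ) [i] = 1 := by
    rw [magnusUnit_val, oneAddX_apply]; simp
  have hv1 : (((magnusUnit i)⁻¹ : (NCSeries n ℤ)ˣ) : NCSeries n ℤ) [] = 1 := by
    rw [magnusUnit_inv_val, geom_nil]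
  have hv2 : (((magnusUnit i)⁻¹ : (NCSeries n ℤ)ˣ) : NCSeries n ℤ) [i] = -1 := by
    rw [magnusUnit_inv_val, geom_cons_self, geom_nil]
  induction e using Int.induction_on with
  | zero =>
    rw [zpow_zero, Units.val_one]
    exact ⟨AllI.one i, by rw [one_def]; simp, by rw [one_def]; simp⟩
  | succ k ih =>
    obtain ⟨ha, hb, hc⟩ := ih
    rw [zpow_add_one, Units.val_mul]
    refine ⟨ha.mul (by rw [magnusUnit_val]; exact allI_oneAddX i), ?_, ?_⟩
    · rw [const_mul, hb, hu1, mul_one]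
    · rw [single_mul, hb, hc, hu1, hu2, one_mul, mul_one]; ring
  | pred k ih =>
    obtain ⟨ha, hb, hc⟩ := ih
    rw [zpow_sub_one, Units.val_mul]
    refine ⟨ha.mul (by rw [magnusUnit_inv_val]; exact allI_geom i), ?_, ?_⟩
    · rw [const_mul, hb, hv1, mul_one]
    · rw [single_mul, hb, hc, hv1, hv2, one_mul, mul_one]
      ring

end CoeffAux

end NCSeries

namespace NCSeries

section BlockProd

variable {n : ℕ}

/-- The product `u_{i₁}^{e₁} ⋯ u_{i_k}^{e_k}` of powers of the units `1 + Xᵢ`. -/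
def blockProd (B : List (Fin n × ℤ)) : (NCSeries n ℤ)ˣ :=
  (B.map fun p => magnusUnit p.1 ^ p.2).prod

theorem blockProd_nil : (blockProd ([] : List (Fin n × ℤ))) = 1 := rfl

theorem blockProd_cons (i : Fin n) (e : ℤ) (B : List (Fin n × ℤ)) :
    blockProd ((i, e) :: B) = magnusUnit i ^ e * blockProd B := by
  rw [blockProd, List.map_cons, List.prod_cons]; rfl

theorem coeff_blockProd : ∀ (B : List (Fin n × ℤ)) (u : List (Fin n)),
    u.IsChain (· ≠ ·) → B.length ≤ u.length →
    ((blockProd B : (NCSeries n ℤ)ˣ) : NCSeries n ℤ) u =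
      if u = B.map Prod.fst then (B.map Prod.snd).prod else 0 := by
  intro B
  induction B with
  | nil =>
    intro u _ _
    rw [blockProd_nil, Units.val_one, one_def]
    simp
  | cons p B' ih =>
    obtain ⟨i, e⟩ := p
    intro u hu hl
    cases u with
    | nil => simp at hl
    | cons a v =>
      simp only [List.length_cons, Nat.add_le_add_iff_right] at hl
      rw [blockProd_cons, Units.val_mul, mul_def]
      rw [show (a :: v : List (Fin n)).length = v.length + 1 from rfl]
      rw [Finset.sum_range_succ']
      have hzero : ((magnusUnit i ^ e : (NCSeries n ℤ)ˣ) : NCSeries n ℤ) ((a :: v).take 0) *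
          ((blockProd B' : (NCSeries n ℤ)ˣ) : NCSeries n ℤ) ((a :: v).drop 0)
          = 0 := by
        have h1 : ((blockProd B' : (NCSeries n ℤ)ˣ) : NCSeries n ℤ) (a :: v) = 0 := by
          rw [ih (a :: v) hu (by simp; omega)]
          rw [if_neg]
          intro hcon
          have := congrArg List.length hcon
          simp at this
          omega
        rw [List.drop_zero, h1, mul_zero]
      rw [hzero, add_zero]
      have hsum : ∑ k ∈ Finset.range (v.length + 1),
          ((magnusUnit i ^ e : (NCSeries n ℤ)ˣ) : NCSeries n ℤ) ((a :: v).take (k + 1)) *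
          ((blockProd B' : (NCSeries n ℤ)ˣ) : NCSeries n ℤ) ((a :: v).drop (k + 1))
          = ((magnusUnit i ^ e : (NCSeries n ℤ)ˣ) : NCSeries n ℤ) [a] *
            ((blockProd B' : (NCSeries n ℤ)ˣ) : NCSeries n ℤ) v := by
        rw [Finset.sum_eq_single_of_mem 0 (Finset.mem_range.2 (Nat.succ_pos _))]
        · simp
        · intro k hk hk0
          rw [Finset.mem_range] at hk
          obtain ⟨k', rfl⟩ := Nat.exists_eq_succ_of_ne_zero hk0
          -- v is nonempty
          cases v with
          | nil => simp at hk
          | cons b v'' =>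
            have hab : a ≠ b := (List.isChain_cons_cons.1 hu).1
            have htake : (a :: b :: v'').take (k' + 1 + 1) = a :: b :: v''.take k' := by
              simp [List.take_succ_cons]
            rw [htake]
            have hbad : ∃ x ∈ a :: b :: v''.take k', x ≠ i := by
              by_cases hai : a = i
              · exact ⟨b, by simp, fun hbi => hab (hai.trans hbi.symm)⟩
              · exact ⟨a, by simp, hai⟩
            rw [(magnusUnit_zpow i e).1 _ hbad, zero_mul]
      rw [hsum]
      have hA : ((magnusUnit i ^ e : (NCSeries n ℤ)ˣ) : NCSeries n ℤ) [a]
          = if a = i then e else 0 := by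
        by_cases hai : a = i
        · rw [if_pos hai, hai]; exact (magnusUnit_zpow i e).2.2
        · rw [if_neg hai]
          exact (magnusUnit_zpow i e).1 _ ⟨a, by simp, hai⟩
      have hB : ((blockProd B' : (NCSeries n ℤ)ˣ) : NCSeries n ℤ) v
          = if v = B'.map Prod.fst then (B'.map Prod.snd).prod else 0 :=
        ih v hu.tail hl
      rw [hA, hB, List.map_cons, List.map_cons, List.prod_cons]
      by_cases hai : a = i
      · by_cases hv : v = B'.map Prod.fst
        · rw [if_pos hai, if_pos hv, if_pos (by rw [hai, hv])]
        · rw [if_pos hai, if_neg hv, mul_zero, if_neg (fun hc => hv (List.cons_eq_cons.1 hc).2)]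
      · rw [if_neg hai, zero_mul, if_neg (fun hc => hai (List.cons_eq_cons.1 hc).1)]

end BlockProd

end NCSeries

namespace NCSeries

section Blocks

variable {n : ℕ}

def sgn (b : Bool) : ℤ := cond b 1 (-1)

theorem sgn_ne_zero (b : Bool) : sgn b ≠ 0 := by cases b <;> simp [sgn]

theorem sgn_pos_iff (b : Bool) : 0 < sgn b ↔ b = true := by cases b <;> simp [sgn]

/-- Prepend a letter to a block decomposition, merging with the first block if possible. -/
def consBlock (p : Fin n × Bool) (B : List (Fin n × ℤ)) : List (Fin n × ℤ) :=
  match B with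
  | [] => [(p.1, sgn p.2)]
  | (j, e) :: B' => if p.1 = j then (j, sgn p.2 + e) :: B' else (p.1, sgn p.2) :: (j, e) :: B'

/-- The block (run-length) decomposition of a word in the free group. -/
def blocks : List (Fin n × Bool) → List (Fin n × ℤ)
  | [] => []
  | p :: t => consBlock p (blocks t)

theorem blocks_ne_nil (L : List (Fin n × Bool)) (h : L ≠ []) : blocks L ≠ [] := by
  cases L with
  | nil => exact absurd rfl h
  | cons p t =>
    show consBlock p (blocks t) ≠ []
    cases hbt : blocks t with
    | nil => simp [consBlock]
    | cons q B' =>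
      obtain ⟨j, e⟩ := q
      simp only [consBlock]
      split <;> simp

theorem gLetter (i : Fin n) (b : Bool) :
    (bif b then magnusUnit i else (magnusUnit i)⁻¹ : (NCSeries n ℤ)ˣ) = magnusUnit i ^ sgn b := by
  cases b <;> simp [sgn]

theorem chain'_of_noRed (L : List (Fin n × Bool))
    (h : ∀ (L₂ L₃ : List (Fin n × Bool)) (x : Fin n) (b : Bool),
      L ≠ L₂ ++ (x, b) :: (x, !b) :: L₃) :
    L.IsChain (fun p q => p.1 = q.1 → p.2 = q.2) := by
  induction L with
  | nil => simp
  | cons p t ih =>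
    cases t with
    | nil => simp
    | cons q t' =>
      rw [List.isChain_cons_cons]
      refine ⟨?_, ih ?_⟩
      · intro h1
        by_contra h2
        apply h [] t' p.1 p.2
        have hq : q = (p.1, !p.2) := by
          obtain ⟨qi, qb⟩ := q; obtain ⟨pi, pb⟩ := p
          simp only at h1 h2 ⊢
          cases pb <;> cases qb <;> simp_all
        rw [hq]
        simp
      · intro L₂ L₃ x b heq
        exact h (p :: L₂) L₃ x b (by rw [List.cons_append, ← heq])

theorem blocks_spec : ∀ L : List (Fin n × Bool),
    L.IsChain (fun p q => p.1 = q.1 → p.2 = q.2) →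
    blockProd (blocks L) = FreeGroup.lift magnusUnit (FreeGroup.mk L) ∧
    (blocks L).IsChain (fun p q => p.1 ≠ q.1) ∧
    (∀ p ∈ blocks L, p.2 ≠ 0) ∧
    (∀ j e B', blocks L = (j, e) :: B' →
      ∃ b t, L = (j, b) :: t ∧ (0 < e ↔ b = true)) := by
  intro L
  induction L with
  | nil =>
    intro _
    refine ⟨?_, by simp [blocks], by simp [blocks], ?_⟩
    · rw [FreeGroup.lift_mk]
      simp [blocks, blockProd_nil]
    · intro j e B' h
      simp [blocks] at h
  | cons p t ih =>
    obtain ⟨i, b⟩ := p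
    intro hch
    obtain ⟨hprod, hchB, hnz, hhead⟩ := ih hch.tail
    have hmk : FreeGroup.lift (magnusUnit (R := ℤ)) (FreeGroup.mk ((i, b) :: t)) =
        magnusUnit i ^ sgn b * FreeGroup.lift (magnusUnit (R := ℤ)) (FreeGroup.mk t) := by
      rw [FreeGroup.lift_mk, FreeGroup.lift_mk, List.map_cons, List.prod_cons, gLetter]
    cases hbt : blocks t with
    | nil =>
      have hbl : blocks ((i, b) :: t) = [(i, sgn b)] := by
        show consBlock (i, b) (blocks t) = _
        rw [hbt]
        rfl
      refine ⟨?_, ?_, ?_, ?_⟩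
      · rw [hbl, hmk, ← hprod, hbt, blockProd_nil, mul_one,
          show ((i, sgn b) :: [] : List (Fin n × ℤ)) = [(i, sgn b)] from rfl] at *
        rw [blockProd_cons, blockProd_nil, mul_one]
      · rw [hbl]; simp
      · rw [hbl]
        intro q hq
        rw [List.mem_singleton] at hq
        rw [hq]
        exact sgn_ne_zero b
      · rw [hbl]
        intro j e B' h
        obtain ⟨h1, h2⟩ := List.cons_eq_cons.1 h
        obtain ⟨hj, he⟩ := Prod.mk.injEq .. ▸ h1
        exact ⟨b, t, by rw [hj], by rw [← he]; exact sgn_pos_iff b⟩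
    | cons q B' =>
      obtain ⟨j, e'⟩ := q
      obtain ⟨b', t', ht, hsign⟩ := hhead j e' B' hbt
      have he'0 : e' ≠ 0 := hnz (j, e') (by rw [hbt]; exact List.mem_cons_self)
      by_cases hij : i = j
      · -- merge with the first block
        have hbb : b = b' := by
          rw [ht] at hch
          exact (List.isChain_cons_cons.1 hch).1 hij
        rw [← hbb] at hsign
        have hkey : sgn b + e' ≠ 0 ∧ (0 < sgn b + e' ↔ b = true) := by
          cases b <;> simp [sgn] at hsign ⊢ <;> omega
        have hbl : blocks ((i, b) :: t) = (j, sgn b + e') :: B' := by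
          show consBlock (i, b) (blocks t) = _
          rw [hbt]
          simp [consBlock, hij]
        refine ⟨?_, ?_, ?_, ?_⟩
        · rw [hbl, blockProd_cons, hmk, ← hprod, hbt, blockProd_cons, hij, zpow_add, mul_assoc]
        · rw [hbl]
          rw [hbt] at hchB
          obtain ⟨hhd, hB'⟩ := List.isChain_cons.1 hchB
          exact List.isChain_cons.2 ⟨hhd, hB'⟩
        · rw [hbl]
          intro q hq
          rcases List.mem_cons.1 hq with rfl | hq'
          · exact hkey.1
          · exact hnz q (by rw [hbt]; exact List.mem_cons_of_mem _ hq')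
        · rw [hbl]
          intro j₂ e₂ B₂ h
          obtain ⟨h1, h2⟩ := List.cons_eq_cons.1 h
          obtain ⟨hj, he⟩ := Prod.mk.injEq .. ▸ h1
          exact ⟨b, t, by rw [← hj, ← hij], by rw [← he]; exact hkey.2⟩
      · -- new block
        have hbl : blocks ((i, b) :: t) = (i, sgn b) :: (j, e') :: B' := by
          show consBlock (i, b) (blocks t) = _
          rw [hbt]
          simp [consBlock, hij]
        refine ⟨?_, ?_, ?_, ?_⟩
        · rw [hbl, blockProd_cons, hmk, ← hprod, hbt]
        · rw [hbl]
          rw [hbt] at hchB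
          exact List.isChain_cons_cons.2 ⟨hij, hchB⟩
        · rw [hbl]
          intro q hq
          rcases List.mem_cons.1 hq with rfl | hq'
          · exact sgn_ne_zero b
          · exact hnz q (by rw [hbt]; exact hq')
        · rw [hbl]
          intro j₂ e₂ B₂ h
          obtain ⟨h1, h2⟩ := List.cons_eq_cons.1 h
          obtain ⟨hj, he⟩ := Prod.mk.injEq .. ▸ h1
          exact ⟨b, t, by rw [← hj], by rw [← he]; exact sgn_pos_iff b⟩

end Blocks

end NCSeries

section MagnusInj

variable {n : ℕ}

theorem toWord_chain' (c : FreeGroup (Fin n)) :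
    c.toWord.IsChain (fun p q => p.1 = q.1 → p.2 = q.2) :=
  NCSeries.chain'_of_noRed c.toWord
    (fun _ _ _ _ heq => FreeGroup.reduce.not ((FreeGroup.reduce_toWord c).trans heq))

theorem magnus_eq_val (c : FreeGroup (Fin n)) :
    magnus n ℤ c = ((FreeGroup.lift (NCSeries.magnusUnit (R := ℤ)) c : (NCSeries n ℤ)ˣ) : NCSeries n ℤ) :=
  rfl

theorem magnus_injective_s4 (n : ℕ) : Function.Injective (magnus n ℤ) := by
  have key : ∀ c : FreeGroup (Fin n), FreeGroup.lift (NCSeries.magnusUnit (R := ℤ)) c = 1 → c = 1 := by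
    intro c hc
    by_contra hc1
    have hL : c.toWord ≠ [] := fun h => hc1 (FreeGroup.toWord_eq_nil_iff.1 h)
    obtain ⟨hprod, hchB, hnz, -⟩ := NCSeries.blocks_spec c.toWord (toWord_chain' c)
    set B := NCSeries.blocks c.toWord with hB
    have hBne : B ≠ [] := NCSeries.blocks_ne_nil _ hL
    set u := B.map Prod.fst with hu
    have hchu : u.IsChain (· ≠ ·) := (List.isChain_map Prod.fst).2 hchB
    have hlen : B.length ≤ u.length := by rw [hu, List.length_map]
    have hco := NCSeries.coeff_blockProd B u hchu hlen
    rw [if_pos rfl] at hco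
    have hponz : (B.map Prod.snd).prod ≠ 0 := by
      refine List.prod_ne_zero ?_
      intro h0
      obtain ⟨p, hp, hp0⟩ := List.mem_map.1 h0
      exact hnz p hp hp0
    rw [hprod, FreeGroup.mk_toWord, hc, Units.val_one] at hco
    have hune : u ≠ [] := by
      rw [hu]
      simpa using hBne
    rw [NCSeries.one_def, if_neg hune] at hco
    exact hponz hco.symm
  intro a b hab
  have h1 : FreeGroup.lift (NCSeries.magnusUnit (R := ℤ)) a = FreeGroup.lift (NCSeries.magnusUnit (R := ℤ)) b :=
    Units.ext hab
  have h2 : FreeGroup.lift (NCSeries.magnusUnit (R := ℤ)) (a * b⁻¹) = (1 : (NCSeries n ℤ)ˣ) := by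
    rw [map_mul, map_inv, h1, mul_inv_cancel]
  exact mul_inv_eq_one.1 (key _ h2)

theorem magnus_const (c : FreeGroup (Fin n)) : magnus n ℤ c [] = 1 := by
  obtain ⟨hprod, -, -, -⟩ := NCSeries.blocks_spec c.toWord (toWord_chain' c)
  have h1 : magnus n ℤ c
      = ((NCSeries.blockProd (NCSeries.blocks c.toWord) : (NCSeries n ℤ)ˣ) : NCSeries n ℤ) := by
    conv_lhs => rw [magnus_eq_val, ← FreeGroup.mk_toWord (x := c)]
    rw [← hprod]
  rw [h1]
  generalize NCSeries.blocks c.toWord = B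
  induction B with
  | nil =>
    rw [NCSeries.blockProd_nil, Units.val_one, NCSeries.one_def]
    simp
  | cons p B' ih =>
    obtain ⟨i, e⟩ := p
    rw [NCSeries.blockProd_cons, Units.val_mul, NCSeries.const_mul, ih,
      (NCSeries.magnusUnit_zpow i e).2.1, one_mul]

theorem conv_left (cS f : NCSeries n ℤ) (w : List (Fin n)) :
    (cS * f) w = cS [] * f w +
      ∑ k ∈ Finset.range w.length, cS (w.take (k + 1)) * f (w.drop (k + 1)) := by
  rw [NCSeries.mul_def, Finset.sum_range_succ', List.take_zero, List.drop_zero, add_comm]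

theorem conv_right (f cS : NCSeries n ℤ) (w : List (Fin n)) :
    (f * cS) w = (∑ k ∈ Finset.range w.length, f (w.take k) * cS (w.drop k)) + f w * cS [] := by
  rw [NCSeries.mul_def, Finset.sum_range_succ, List.take_length, List.drop_length]

end MagnusInj

/-- The Magnus ordering is a bi-invariant total order on the
free group `Fₙ`. -/
theorem magnusOrdering_is_biordering (n : ℕ) :
    IsBiOrdering (magnusLt (n := n)) := by
  constructor
  · refine { trichotomous := ?_, irrefl := ?_, trans := ?_ }
    · -- trichotomy
      intro a b
      suffices H : magnusLt a b ∨ a = b ∨ magnusLt b a by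
        intro h1 h2
        rcases H with H | H | H
        · exact absurd H h1
        · exact H
        · exact absurd H h2
      rcases eq_or_ne a b with rfl | hab
      · exact Or.inr (Or.inl rfl)
      · have hne : magnus n ℤ a ≠ magnus n ℤ b := fun h => hab (magnus_injective_s4 n h)
        have hS : ({w | magnus n ℤ a w ≠ magnus n ℤ b w} : Set (List (Fin n))).Nonempty := by
          by_contra h
          apply hne
          funext w
          by_contra hw
          exact h ⟨w, hw⟩
        obtain ⟨w, hw, hmin⟩ := degLex_exists_min hS
        simp only [Set.mem_setOf_eq] at hw
        have hmin' : ∀ w', NCDegLex w' w → magnus n ℤ a w' = magnus n ℤ b w' := by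
          intro w' h'
          by_contra hcon
          exact hmin w' h' hcon
        rcases lt_or_gt_of_ne hw with h | h
        · exact Or.inl ⟨w, h, hmin'⟩
        · exact Or.inr (Or.inr ⟨w, h, fun w' h' => (hmin' w' h').symm⟩)
    · -- irreflexivity
      rintro a ⟨w, hw, -⟩
      exact lt_irrefl _ hw
    · -- transitivity
      rintro a b c ⟨w₁, h₁, m₁⟩ ⟨w₂, h₂, m₂⟩
      rcases eq_or_ne w₁ w₂ with rfl | hne
      · exact ⟨w₁, h₁.trans h₂, fun w' h' => (m₁ w' h').trans (m₂ w' h')⟩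
      · rcases degLex_trichotomy w₁ w₂ hne with h | h
        · exact ⟨w₁, lt_of_lt_of_eq h₁ (m₂ w₁ h),
            fun w' h' => (m₁ w' h').trans (m₂ w' (degLex_trans h' h))⟩
        · exact ⟨w₂, lt_of_eq_of_lt (m₁ w₂ h) h₂,
            fun w' h' => (m₁ w' (degLex_trans h' h)).trans (m₂ w' h')⟩
  · -- bi-invariance
    rintro a b c ⟨w, hlt, hmin⟩
    constructor
    · -- left invariance
      refine ⟨w, ?_, ?_⟩
      · rw [map_mul, map_mul, conv_left, conv_left, magnus_const c, one_mul, one_mul]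
        have hsum : ∑ k ∈ Finset.range w.length,
              magnus n ℤ c (w.take (k + 1)) * magnus n ℤ a (w.drop (k + 1))
            = ∑ k ∈ Finset.range w.length,
              magnus n ℤ c (w.take (k + 1)) * magnus n ℤ b (w.drop (k + 1)) := by
          refine Finset.sum_congr rfl fun k hk => ?_
          rw [Finset.mem_range] at hk
          rw [hmin _ (degLex_of_length_lt (by rw [List.length_drop]; omega))]
        rw [hsum]
        exact add_lt_add_left hlt _
      · intro w' h'
        rw [map_mul, map_mul, conv_left, conv_left, hmin w' h']
        congr 1
        refine Finset.sum_congr rfl fun k hk => ?_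
        rw [Finset.mem_range] at hk
        rw [hmin _ (degLex_trans (degLex_of_length_lt (by rw [List.length_drop]; omega)) h')]
    · -- right invariance
      refine ⟨w, ?_, ?_⟩
      · rw [map_mul, map_mul, conv_right, conv_right, magnus_const c, mul_one, mul_one]
        have hsum : ∑ k ∈ Finset.range w.length,
              magnus n ℤ a (w.take k) * magnus n ℤ c (w.drop k)
            = ∑ k ∈ Finset.range w.length,
              magnus n ℤ b (w.take k) * magnus n ℤ c (w.drop k) := by
          refine Finset.sum_congr rfl fun k hk => ?_
          rw [Finset.mem_range] at hk
          rw [hmin _ (degLex_of_length_lt (by rw [List.length_take]; omega))]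
        rw [hsum]
        exact add_lt_add_right hlt _
      · intro w' h'
        rw [map_mul, map_mul, conv_right, conv_right, hmin w' h']
        congr 1
        refine Finset.sum_congr rfl fun k hk => ?_
        rw [Finset.mem_range] at hk
        rw [hmin _ (degLex_trans (degLex_of_length_lt (by rw [List.length_take]; omega)) h')]

end
end

section
/- Let G be a group and (G_k)_{k≥1} a descending chain of normal subgroups with G₁ = G and ⋂_k G_k = {1}, such that each extension 1 → G_k/G_{k+1} → G/G_{k+1} → G/G_k → 1 is central and each G_k/G_{k+1} is torsion-free abelian. Then G is bi-orderable. -/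
/-- Every torsion-free commutative group admits a positive cone. -/
lemma exists_cone_of_torsionFree {A : Type*} [CommGroup A]
    (tf : ∀ a : A, ∀ n : ℕ, 1 ≤ n → a ^ n = 1 → a = 1) :
    ∃ C : Set A, (∀ x ∈ C, ∀ y ∈ C, x * y ∈ C) ∧ (∀ x ∈ C, x⁻¹ ∉ C) ∧
      (∀ a : A, a ≠ 1 → a ∈ C ∨ a⁻¹ ∈ C) := by
  classical
  set 𝒮 : Set (Set A) :=
    {S | (∀ x ∈ S, ∀ y ∈ S, x * y ∈ S) ∧ (∀ x ∈ S, x⁻¹ ∉ S)} with h𝒮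
  have hchaincond : ∀ c ⊆ 𝒮, IsChain (· ⊆ ·) c → c.Nonempty →
      ∃ ub ∈ 𝒮, ∀ s ∈ c, s ⊆ ub := by
    intro c hc𝒮 hchain _
    refine ⟨⋃₀ c, ⟨?_, ?_⟩, fun s hs => Set.subset_sUnion_of_mem hs⟩
    · rintro x ⟨s, hs, hxs⟩ y ⟨t, ht, hyt⟩
      rcases hchain.total hs ht with h | h
      · exact ⟨t, ht, (hc𝒮 ht).1 x (h hxs) y hyt⟩
      · exact ⟨s, hs, (hc𝒮 hs).1 x hxs y (h hyt)⟩
    · rintro x ⟨s, hs, hxs⟩ ⟨t, ht, hxt⟩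
      rcases hchain.total hs ht with h | h
      · exact (hc𝒮 ht).2 x (h hxs) hxt
      · exact (hc𝒮 hs).2 x hxs (h hxt)
  have hempty : (∅ : Set A) ∈ 𝒮 := by
    constructor <;> intro x hx <;> exact absurd hx (Set.notMem_empty x)
  obtain ⟨M, hMmem, hMmax⟩ :
      ∃ m, m ∈ 𝒮 ∧ ∀ a ∈ 𝒮, m ⊆ a → a = m := by
    obtain ⟨m, -, hmax⟩ := zorn_subset_nonempty 𝒮 hchaincond ∅ hempty
    exact ⟨m, hmax.1, fun a ha hma => hmax.eq_of_ge ha hma⟩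
  obtain ⟨hMmul, hMinv⟩ := hMmem
  have h1M : (1 : A) ∉ M := fun h => hMinv 1 h (by simpa using h)
  have hpowM : ∀ a ∈ M, ∀ n : ℕ, 1 ≤ n → a ^ n ∈ M := by
    intro a ha n hn
    induction n with
    | zero => omega
    | succ m ih =>
      rcases Nat.eq_or_lt_of_le hn with h | h
      · simpa [← h] using ha
      · rw [pow_succ]; exact hMmul _ (ih (by omega)) _ ha
  have key : ∀ b : A, b ≠ 1 → b ∉ M → ∃ p : ℕ, 1 ≤ p ∧ (b⁻¹) ^ p ∈ M := by
    intro b hb1 hbM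
    set T : Set A :=
      {x | ∃ n : ℕ, ∃ s : A, (s ∈ M ∨ s = 1) ∧ ¬(n = 0 ∧ s = 1) ∧ x = b ^ n * s} with hT
    have hMT : M ⊆ T := by
      intro x hx
      exact ⟨0, x, Or.inl hx, fun h => h1M (h.2 ▸ hx), by simp⟩
    have hbT : b ∈ T := ⟨1, 1, Or.inr rfl, by simp, by simp⟩
    have hTmul : ∀ x ∈ T, ∀ y ∈ T, x * y ∈ T := by
      rintro x ⟨n, s, hs, hns, rfl⟩ y ⟨m, t, ht, hmt, rfl⟩
      refine ⟨n + m, s * t, ?_, ?_, by rw [pow_add, mul_mul_mul_comm]⟩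
      · rcases hs with hs | rfl
        · rcases ht with ht | rfl
          · exact Or.inl (hMmul _ hs _ ht)
          · simpa using Or.inl hs
        · simpa using ht
      · rintro ⟨hnm, hst⟩
        have hn0 : n = 0 := by omega
        have hm0 : m = 0 := by omega
        have hsM : s ∈ M := by
          rcases hs with hs | rfl
          · exact hs
          · exact absurd ⟨hn0, rfl⟩ hns
        have htM : t ∈ M := by
          rcases ht with ht | rfl
          · exact ht
          · exact absurd ⟨hm0, rfl⟩ hmt
        have hinv : s⁻¹ = t := inv_eq_of_mul_eq_one_right hst
        exact hMinv s hsM (by rw [hinv]; exact htM)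
    have hTne : T ≠ M := fun h => hbM (h ▸ hbT)
    have hT𝒮 : T ∉ 𝒮 := fun h => hTne (hMmax T h hMT)
    have : ∃ x ∈ T, x⁻¹ ∈ T := by
      by_contra h
      push_neg at h
      exact hT𝒮 ⟨hTmul, h⟩
    obtain ⟨x, ⟨n, s, hs, hns, hx⟩, ⟨m, t, ht, hmt, hxi⟩⟩ := this
    have hone : b ^ (n + m) * (s * t) = 1 := by
      rw [pow_add, mul_mul_mul_comm, ← hx, ← hxi, mul_inv_cancel]
    by_cases hp : n + m = 0
    · have hn0 : n = 0 := by omega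
      have hm0 : m = 0 := by omega
      have hsM : s ∈ M := by
        rcases hs with hs | rfl
        · exact hs
        · exact absurd ⟨hn0, rfl⟩ hns
      have htM : t ∈ M := by
        rcases ht with ht | rfl
        · exact ht
        · exact absurd ⟨hm0, rfl⟩ hmt
      have hst : s * t = 1 := by simpa [hp] using hone
      have hinv : s⁻¹ = t := inv_eq_of_mul_eq_one_right hst
      exact absurd (by rw [hinv]; exact htM) (hMinv s hsM)
    · refine ⟨n + m, by omega, ?_⟩
      have hcM : s * t ∈ M ∨ s * t = 1 := by
        rcases hs with hs | rfl
        · rcases ht with ht | rfl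
          · exact Or.inl (hMmul _ hs _ ht)
          · exact Or.inl (by simpa using hs)
        · rcases ht with ht | rfl
          · exact Or.inl (by simpa using ht)
          · exact Or.inr (by simp)
      rcases hcM with hcM | hc1
      · have heq : (b⁻¹) ^ (n + m) = s * t := by
          rw [inv_pow]
          exact inv_eq_of_mul_eq_one_right hone
        rw [heq]; exact hcM
      · have hb : b ^ (n + m) = 1 := by rw [hc1, mul_one] at hone; exact hone
        exact absurd (tf b (n + m) (by omega) hb) hb1
  refine ⟨M, hMmul, hMinv, ?_⟩
  intro a ha1
  by_contra h
  push_neg at h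
  obtain ⟨haM, haiM⟩ := h
  obtain ⟨p, hp, hpM⟩ := key a ha1 haM
  obtain ⟨q, hq, hqM⟩ := key a⁻¹ (by simpa using ha1) haiM
  rw [inv_inv] at hqM
  have hu : ((a⁻¹) ^ p) ^ q ∈ M := hpowM _ hpM q hq
  have hv : (a ^ q) ^ p ∈ M := hpowM _ hqM p hp
  have heq : ((a ^ q) ^ p)⁻¹ = ((a⁻¹) ^ p) ^ q := by
    rw [← pow_mul, ← pow_mul, inv_pow, Nat.mul_comm]
  exact hMinv _ hv (heq ▸ hu)

/-- A relative positive cone for a subquotient `H/N` which is torsion-free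
and abelian. -/
lemma exists_relative_cone {G : Type*} [Group G] (H N : Subgroup G) [hNn : N.Normal]
    (comm : ∀ g ∈ H, ∀ h ∈ H, g⁻¹ * h⁻¹ * g * h ∈ N)
    (tf : ∀ g ∈ H, ∀ n : ℕ, 1 ≤ n → g ^ n ∈ N → g ∈ N) :
    ∃ C : Set G, (∀ x ∈ C, x ∈ H) ∧ (∀ x ∈ C, x ∉ N) ∧
      (∀ x ∈ C, ∀ y ∈ C, x * y ∈ C) ∧
      (∀ x ∈ C, ∀ y ∈ H, x⁻¹ * y ∈ N → y ∈ C) ∧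
      (∀ g ∈ H, g ∉ N → g ∈ C ∨ g⁻¹ ∈ C) := by
  classical
  have hcomm : ∀ a b : H ⧸ N.subgroupOf H, a * b = b * a := by
    intro a b
    refine QuotientGroup.induction_on a fun x => QuotientGroup.induction_on b fun y => ?_
    rw [← QuotientGroup.mk_mul, ← QuotientGroup.mk_mul, QuotientGroup.eq,
      Subgroup.mem_subgroupOf]
    have h := comm y.1 y.2 x.1 x.2
    have heq : (((x * y)⁻¹ * (y * x) : H) : G) = (y : G)⁻¹ * (x : G)⁻¹ * (y : G) * (x : G) := by
      push_cast
      group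
    rw [heq]
    exact h
  letI : CommGroup (H ⧸ N.subgroupOf H) :=
    { (inferInstance : Group (H ⧸ N.subgroupOf H)) with mul_comm := hcomm }
  have htfq : ∀ a : H ⧸ N.subgroupOf H, ∀ n : ℕ, 1 ≤ n → a ^ n = 1 → a = 1 := by
    intro a n hn
    refine QuotientGroup.induction_on a fun x => ?_
    intro hxn
    rw [← QuotientGroup.mk_pow, QuotientGroup.eq_one_iff, Subgroup.mem_subgroupOf] at hxn
    rw [QuotientGroup.eq_one_iff, Subgroup.mem_subgroupOf]
    exact tf x.1 x.2 n hn (by simpa using hxn)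
  obtain ⟨C', hC'mul, hC'inv, hC'tot⟩ := exists_cone_of_torsionFree htfq
  have h1C' : (1 : H ⧸ N.subgroupOf H) ∉ C' := fun h => hC'inv 1 h (by simpa using h)
  refine ⟨{g : G | ∃ hg : g ∈ H, (QuotientGroup.mk (⟨g, hg⟩ : H) : H ⧸ N.subgroupOf H) ∈ C'},
    ?_, ?_, ?_, ?_, ?_⟩
  · rintro x ⟨hx, -⟩; exact hx
  · rintro x ⟨hx, hxC⟩ hxN
    have : (QuotientGroup.mk (⟨x, hx⟩ : H) : H ⧸ N.subgroupOf H) = 1 := by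
      rw [QuotientGroup.eq_one_iff, Subgroup.mem_subgroupOf]
      exact hxN
    exact h1C' (this ▸ hxC)
  · rintro x ⟨hx, hxC⟩ y ⟨hy, hyC⟩
    refine ⟨mul_mem hx hy, ?_⟩
    have heq : (⟨x * y, mul_mem hx hy⟩ : H) = ⟨x, hx⟩ * ⟨y, hy⟩ := rfl
    rw [heq, QuotientGroup.mk_mul]
    exact hC'mul _ hxC _ hyC
  · rintro x ⟨hx, hxC⟩ y hy hxyN
    refine ⟨hy, ?_⟩
    have : (QuotientGroup.mk (⟨x, hx⟩ : H) : H ⧸ N.subgroupOf H) = QuotientGroup.mk ⟨y, hy⟩ := by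
      rw [QuotientGroup.eq, Subgroup.mem_subgroupOf]
      simpa using hxyN
    exact this ▸ hxC
  · intro g hg hgN
    have hne : (QuotientGroup.mk (⟨g, hg⟩ : H) : H ⧸ N.subgroupOf H) ≠ 1 := by
      rw [Ne, QuotientGroup.eq_one_iff, Subgroup.mem_subgroupOf]
      exact hgN
    rcases hC'tot _ hne with h | h
    · exact Or.inl ⟨hg, h⟩
    · refine Or.inr ⟨inv_mem hg, ?_⟩
      have heq : (⟨g⁻¹, inv_mem hg⟩ : H) = (⟨g, hg⟩ : H)⁻¹ := rfl
      rw [heq, QuotientGroup.mk_inv]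
      exact h

/-- If `G` has a descending chain of normal subgroups
`(G_k)_{k ≥ 1}` with `G₁ = G` and `⋂ G_k = {1}`, such that each extension
`1 → G_k/G_{k+1} → G/G_{k+1} → G/G_k → 1` is central (i.e. `[G, G_k] ⊆ G_{k+1}`)
and each quotient `G_k/G_{k+1}` is torsion-free (abelian), then `G` is
bi-orderable. -/
theorem biorderable_of_central_tower {G : Type*} [Group G] (Gk : ℕ → Subgroup G)
    (hnormal : ∀ k : ℕ, 1 ≤ k → (Gk k).Normal)
    (hone : Gk 1 = ⊤)
    (hdesc : ∀ k : ℕ, 1 ≤ k → Gk (k + 1) ≤ Gk k)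
    (hinter : ∀ g : G, (∀ k : ℕ, 1 ≤ k → g ∈ Gk k) → g = 1)
    (hcentral : ∀ k : ℕ, 1 ≤ k → ∀ g ∈ Gk k, ∀ x : G,
        x⁻¹ * g⁻¹ * x * g ∈ Gk (k + 1))
    (htf : ∀ k : ℕ, 1 ≤ k → ∀ g ∈ Gk k, ∀ n : ℕ, 1 ≤ n →
        g ^ n ∈ Gk (k + 1) → g ∈ Gk (k + 1)) :
    ∃ r : G → G → Prop, IsBiOrdering r := by
  classical
  have hle : ∀ k l : ℕ, 1 ≤ k → k ≤ l → Gk l ≤ Gk k := by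
    intro k l hk hkl
    induction l, hkl using Nat.le_induction with
    | base => exact le_rfl
    | succ m hm ih => exact le_trans (hdesc m (le_trans hk hm)) ih
  have hCex : ∀ k : ℕ, ∃ C : Set G, 1 ≤ k →
      (∀ x ∈ C, x ∈ Gk k) ∧ (∀ x ∈ C, x ∉ Gk (k + 1)) ∧
      (∀ x ∈ C, ∀ y ∈ C, x * y ∈ C) ∧
      (∀ x ∈ C, ∀ y ∈ Gk k, x⁻¹ * y ∈ Gk (k + 1) → y ∈ C) ∧
      (∀ g ∈ Gk k, g ∉ Gk (k + 1) → g ∈ C ∨ g⁻¹ ∈ C) := by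
    intro k
    by_cases hk : 1 ≤ k
    · haveI := hnormal (k + 1) (by omega)
      obtain ⟨C, h1, h2, h3, h4, h5⟩ := exists_relative_cone (Gk k) (Gk (k + 1))
        (fun g hg h hh => hcentral k hk h hh g)
        (fun g hg n hn hgn => htf k hk g hg n hn hgn)
      exact ⟨C, fun _ => ⟨h1, h2, h3, h4, h5⟩⟩
    · exact ⟨∅, fun h => absurd h hk⟩
  choose C hC using hCex
  set pos : G → Prop := fun g => ∃ k : ℕ, 1 ≤ k ∧ g ∈ C k with hpos
  have hconj : ∀ g : G, pos g → ∀ x : G, pos (x⁻¹ * g * x) := by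
    rintro g ⟨k, hk, hgC⟩ x
    obtain ⟨h1, h2, h3, h4, h5⟩ := hC k hk
    have hg : g ∈ Gk k := h1 g hgC
    have hmem : x⁻¹ * g * x ∈ Gk k := by
      have := (hnormal k hk).conj_mem g hg x⁻¹
      simpa [mul_assoc] using this
    refine ⟨k, hk, h4 g hgC _ hmem ?_⟩
    rw [show g⁻¹ * (x⁻¹ * g * x) = (x⁻¹ * g⁻¹ * x * g)⁻¹ by group]
    exact inv_mem (hcentral k hk g hg x)
  have hmul : ∀ g h : G, pos g → pos h → pos (g * h) := by
    rintro g h ⟨k, hk, hgC⟩ ⟨l, hl, hhC⟩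
    obtain ⟨hk1, hk2, hk3, hk4, hk5⟩ := hC k hk
    obtain ⟨hl1, hl2, hl3, hl4, hl5⟩ := hC l hl
    rcases lt_trichotomy k l with hkl | rfl | hlk
    · have hh : h ∈ Gk (k + 1) := hle (k + 1) l (by omega) (by omega) (hl1 h hhC)
      have hg : g ∈ Gk k := hk1 g hgC
      refine ⟨k, hk, hk4 g hgC (g * h) (mul_mem hg (hdesc k hk hh)) ?_⟩
      rw [show g⁻¹ * (g * h) = h by group]
      exact hh
    · exact ⟨k, hk, hk3 g hgC h hhC⟩
    · have hg : g ∈ Gk (l + 1) := hle (l + 1) k (by omega) (by omega) (hk1 g hgC)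
      have hh : h ∈ Gk l := hl1 h hhC
      refine ⟨l, hl, hl4 h hhC (g * h) (mul_mem (hdesc l hl hg) hh) ?_⟩
      rw [show h⁻¹ * (g * h) = h⁻¹ * g * h by group]
      have := (hnormal (l + 1) (by omega)).conj_mem g hg h⁻¹
      simpa [mul_assoc] using this
  have hpos1 : ¬ pos 1 := by
    rintro ⟨k, hk, h1C⟩
    obtain ⟨h1, h2, h3, h4, h5⟩ := hC k hk
    exact h2 1 h1C (one_mem _)
  have htot : ∀ g : G, g ≠ 1 → pos g ∨ pos g⁻¹ := by
    intro g hg1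
    have hex : ∃ m : ℕ, 1 ≤ m ∧ g ∉ Gk m := by
      by_contra h
      push_neg at h
      exact hg1 (hinter g h)
    have hspec := Nat.find_spec hex
    have hm2 : 2 ≤ Nat.find hex := by
      rcases Nat.lt_or_ge (Nat.find hex) 2 with h | h
      · exfalso
        have h1 : Nat.find hex = 1 := by omega
        rw [h1, hone] at hspec
        exact hspec.2 trivial
      · exact h
    set k := Nat.find hex - 1 with hkdef
    have hk1 : 1 ≤ k := by omega
    have hgk : g ∈ Gk k := by
      by_contra hgk
      have : Nat.find hex ≤ k := Nat.find_le ⟨hk1, hgk⟩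
      omega
    have hgk1 : g ∉ Gk (k + 1) := by
      have hkk : k + 1 = Nat.find hex := by omega
      rw [hkk]
      exact hspec.2
    obtain ⟨h1, h2, h3, h4, h5⟩ := hC k hk1
    rcases h5 g hgk hgk1 with h | h
    · exact Or.inl ⟨k, hk1, h⟩
    · exact Or.inr ⟨k, hk1, h⟩
  set r : G → G → Prop := fun a b => pos (a⁻¹ * b) with hr
  have hirr : IsIrrefl G r := by
    refine ⟨fun a ha => ?_⟩
    have ha' : pos (a⁻¹ * a) := ha
    rw [inv_mul_cancel] at ha'
    exact hpos1 ha'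
  have htrans : IsTrans G r := by
    refine ⟨fun a b c hab hbc => ?_⟩
    have h := hmul _ _ (hab : pos (a⁻¹ * b)) (hbc : pos (b⁻¹ * c))
    rw [show a⁻¹ * b * (b⁻¹ * c) = a⁻¹ * c by group] at h
    exact h
  have htri : IsTrichotomous G r := by
    refine Std.trichotomous_of_rel_or_eq_or_rel_swap (fun {a b} => ?_)
    by_cases hab : a = b
    · exact Or.inr (Or.inl hab)
    · have hne : a⁻¹ * b ≠ 1 := fun h => hab (by rwa [inv_mul_eq_one] at h)
      rcases htot _ hne with h | h
      · exact Or.inl h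
      · refine Or.inr (Or.inr ?_)
        rw [show (a⁻¹ * b)⁻¹ = b⁻¹ * a by group] at h
        exact h
  have hsto : IsStrictTotalOrder G r :=
    { toTrichotomous := htri, toIsStrictOrder := { toIrrefl := hirr, toIsTrans := htrans } }
  have hbi : ∀ a b c : G, r a b → r (c * a) (c * b) ∧ r (a * c) (b * c) := by
    intro a b c hab
    constructor
    · show pos ((c * a)⁻¹ * (c * b))
      rw [show (c * a)⁻¹ * (c * b) = a⁻¹ * b by group]
      exact hab
    · show pos ((a * c)⁻¹ * (b * c))
      have h := hconj _ (hab : pos (a⁻¹ * b)) c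
      rw [show c⁻¹ * (a⁻¹ * b) * c = (a * c)⁻¹ * (b * c) by group] at h
      exact h
  exact ⟨r, hsto, hbi⟩
end

section
/- Let R = ⊕_{i≥0} R^i be a graded ℝ-algebra with multiplicative filtration F^k R = ⊕_{i≥k} R^i, and let Θ : G → R× be an injective group homomorphism whose image lies in 1 + F¹R. Fix for each i a linear total order <_i on R^i that is invariant under addition. Define a < b for a,b ∈ G iff at the smallest degree i where the degree-i components of Θ(a) and Θ(b) differ, the component of Θ(a) is <_i-smaller than that of Θ(b). Then < is a bi-invariant total order on G. -/
/-- Let `A = ⊕ R^i` be a graded algebra, with projections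
`π i` onto the graded pieces `Rg i`, with multiplicative filtration
`F^k = {x | π m x = 0 for m < k}` (so `F^k · F^l ⊆ F^{k+l}`), and let
`Θ : Γ → A` be an injective group homomorphism with image in `1 + F¹`.
Fix on each `Rg i` a translation-invariant strict total order `o i`.  Then the
relation comparing `Θ a` and `Θ b` at the smallest degree where their
components differ is a bi-invariant total order on `Γ`. -/
theorem holonomy_ordering_biinvariant {A : Type*} [Ring A] {Γ : Type*} [Group Γ]
    (Rg : ℕ → AddSubgroup A) (π : ℕ → A →+ A)
    (hmem : ∀ (i : ℕ) (x : A), π i x ∈ Rg i)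
    (hproj : ∀ i : ℕ, ∀ x ∈ Rg i, π i x = x)
    (horth : ∀ i j : ℕ, i ≠ j → ∀ x ∈ Rg i, π j x = 0)
    (hsep : ∀ x : A, (∀ i : ℕ, π i x = 0) → x = 0)
    (hFmul : ∀ (k l : ℕ) (x y : A), (∀ m : ℕ, m < k → π m x = 0) →
      (∀ m : ℕ, m < l → π m y = 0) → ∀ m : ℕ, m < k + l → π m (x * y) = 0)
    (o : ℕ → A → A → Prop)
    (htri : ∀ i : ℕ, ∀ x ∈ Rg i, ∀ y ∈ Rg i, o i x y ∨ x = y ∨ o i y x)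
    (hirr : ∀ i : ℕ, ∀ x ∈ Rg i, ¬ o i x x)
    (htrans : ∀ i : ℕ, ∀ x ∈ Rg i, ∀ y ∈ Rg i, ∀ z ∈ Rg i,
      o i x y → o i y z → o i x z)
    (hadd : ∀ i : ℕ, ∀ x ∈ Rg i, ∀ y ∈ Rg i, ∀ z ∈ Rg i,
      o i x y → o i (x + z) (y + z))
    (Θ : Γ →* A) (hinj : Function.Injective Θ)
    (hΘ : ∀ g : Γ, ∀ m : ℕ, m < 1 → π m (Θ g - 1) = 0) :
    IsBiOrdering (fun a b : Γ => ∃ i : ℕ,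
      o i (π i (Θ a)) (π i (Θ b)) ∧ ∀ m : ℕ, m < i → π m (Θ a) = π m (Θ b)) := by
  -- key cancellation: multiplying on the left by Θ c shifts degree-≤ i components
  -- by the same amount
  have keyL : ∀ (c a b : Γ) (i : ℕ), (∀ m, m < i → π m (Θ a) = π m (Θ b)) →
      ∀ m, m ≤ i → π m (Θ (c * a)) - π m (Θ (c * b)) = π m (Θ a) - π m (Θ b) := by
    intro c a b i hlt m hm
    have h1 : ∀ m, m < i → π m (Θ a - Θ b) = 0 := fun m hm => by
      rw [map_sub, hlt m hm, sub_self]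
    have h2 : π m ((Θ c - 1) * (Θ a - Θ b)) = 0 :=
      hFmul 1 i _ _ (hΘ c) h1 m (by omega)
    have heq : Θ (c * a) - Θ (c * b) = (Θ a - Θ b) + (Θ c - 1) * (Θ a - Θ b) := by
      simp only [map_mul]; noncomm_ring
    have := congrArg (π m) heq
    rw [map_sub, map_add, map_sub, h2, add_zero] at this
    exact this
  have keyR : ∀ (c a b : Γ) (i : ℕ), (∀ m, m < i → π m (Θ a) = π m (Θ b)) →
      ∀ m, m ≤ i → π m (Θ (a * c)) - π m (Θ (b * c)) = π m (Θ a) - π m (Θ b) := by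
    intro c a b i hlt m hm
    have h1 : ∀ m, m < i → π m (Θ a - Θ b) = 0 := fun m hm => by
      rw [map_sub, hlt m hm, sub_self]
    have h2 : π m ((Θ a - Θ b) * (Θ c - 1)) = 0 :=
      hFmul i 1 _ _ h1 (hΘ c) m (by omega)
    have heq : Θ (a * c) - Θ (b * c) = (Θ a - Θ b) + (Θ a - Θ b) * (Θ c - 1) := by
      simp only [map_mul]; noncomm_ring
    have := congrArg (π m) heq
    rw [map_sub, map_add, map_sub, h2, add_zero] at this
    exact this
  -- generic transport along a key cancellation
  have shift : ∀ (a b a' b' : Γ) (i : ℕ),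
      o i (π i (Θ a)) (π i (Θ b)) → (∀ m, m < i → π m (Θ a) = π m (Θ b)) →
      (∀ m, m ≤ i → π m (Θ a') - π m (Θ b') = π m (Θ a) - π m (Θ b)) →
      (∃ j : ℕ, o j (π j (Θ a')) (π j (Θ b')) ∧
        ∀ m : ℕ, m < j → π m (Θ a') = π m (Θ b')) := by
    intro a b a' b' i ho hlo hkey
    classical
    refine ⟨i, ?_, ?_⟩
    · set z := π i (Θ b') - π i (Θ b) with hz
      have hzmem : z ∈ Rg i := (Rg i).sub_mem (hmem _ _) (hmem _ _)
      have hA : π i (Θ a') = π i (Θ a) + z := by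
        have h := hkey i le_rfl
        have h2 : π i (Θ a') = (π i (Θ a) - π i (Θ b)) + π i (Θ b') := by
          rw [← h]; abel
        rw [h2, hz]; abel
      have hB : π i (Θ b') = π i (Θ b) + z := by
        rw [hz]; abel
      rw [hA, hB]
      exact hadd i _ (hmem _ _) _ (hmem _ _) z hzmem ho
    · intro m hm
      have := hkey m (le_of_lt hm)
      rw [hlo m hm, sub_self, sub_eq_zero] at this
      exact this
  constructor
  · refine { trichotomous := ?_, irrefl := ?_, trans := ?_ }
    · intro a b hnab hnba
      classical
      by_cases hab : a = b
      · exact hab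
      · have hne : Θ a ≠ Θ b := fun h => hab (hinj h)
        have hex : ∃ i : ℕ, π i (Θ a) ≠ π i (Θ b) := by
          by_contra h
          push_neg at h
          exact hne (sub_eq_zero.mp (hsep _ (fun i => by
            rw [map_sub, h i, sub_self])))
        set i := Nat.find hex with hi
        have hlo : ∀ m, m < i → π m (Θ a) = π m (Θ b) := fun m hm => by
          have := Nat.find_min hex hm; push_neg at this; exact this
        rcases htri i _ (hmem i (Θ a)) _ (hmem i (Θ b)) with h | h | h
        · exact absurd ⟨i, h, hlo⟩ hnab
        · exact absurd h (Nat.find_spec hex)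
        · exact absurd ⟨i, h, fun m hm => (hlo m hm).symm⟩ hnba
    · rintro a ⟨i, ho, -⟩
      exact hirr i _ (hmem i (Θ a)) ho
    · rintro a b c ⟨i, hi, hli⟩ ⟨j, hj, hlj⟩
      rcases lt_trichotomy i j with h | h | h
      · refine ⟨i, ?_, fun m hm => (hli m hm).trans (hlj m (hm.trans h))⟩
        rwa [← hlj i h]
      · subst h
        exact ⟨i, htrans i _ (hmem _ _) _ (hmem _ _) _ (hmem _ _) hi hj,
          fun m hm => (hli m hm).trans (hlj m hm)⟩
      · refine ⟨j, ?_, fun m hm => (hli m (hm.trans h)).trans (hlj m hm)⟩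
        rwa [hli j h]
  · rintro a b c ⟨i, ho, hlo⟩
    exact ⟨shift a b (c * a) (c * b) i ho hlo (keyL c a b i hlo),
      shift a b (a * c) (b * c) i ho hlo (keyR c a b i hlo)⟩
end

section
/- Let μ, Θ : Fₙ → ℝ⟨⟨X₁,…,Xₙ⟩⟩ be two injective homomorphisms with μ(xᵢ) = 1 + Xᵢ and Θ(xᵢ) = 1 + Xᵢ + (terms of degree ≥ 2), and suppose Θ = α ∘ μ for a filtration-preserving algebra automorphism α with α(Xᵢ) ≡ Xᵢ mod J². Then the total orders on Fₙ defined lexicographically from the DegLex-ordered coefficient functions of μ and of Θ respectively coincide. -/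
noncomputable section

/-- The DegLex ordering on noncommutative monomials (words): compare first by
degree (length), then lexicographically by the index sequence. -/
def DegLexWord {n : ℕ} (w w' : List (Fin n)) : Prop :=
  w.length < w'.length ∨ (w.length = w'.length ∧ List.Lex (· < ·) w w')

/-- The total order on the free group defined lexicographically from the
DegLex-ordered coefficient functions of an injective expansion `ν`. -/
def coeffLt {n : ℕ} (ν : FreeGroup (Fin n) →* NCSeries n ℝ)
    (a b : FreeGroup (Fin n)) : Prop :=
  ∃ w : List (Fin n), ν a w < ν b w ∧
    ∀ w' : List (Fin n), DegLexWord w' w → ν a w' = ν b w'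

namespace MagnusAux

open NCSeries

variable {n : ℕ}

/-- Evaluation at a word, as an additive monoid hom. -/
def evalHom {R : Type*} [CommRing R] (w : List (Fin n)) : NCSeries n R →+ R where
  toFun f := f w
  map_zero' := rfl
  map_add' _ _ := rfl

theorem sum_apply' {R : Type*} [CommRing R] {ι : Type*} (s : Finset ι)
    (f : ι → NCSeries n R) (w : List (Fin n)) :
    (∑ i ∈ s, f i) w = ∑ i ∈ s, f i w :=
  map_sum (evalHom w) f s

theorem sub_def' {R : Type*} [CommRing R] (f g : NCSeries n R) (w : List (Fin n)) :
    (f - g) w = f w - g w := rfl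

theorem smul_def' {R : Type*} [CommRing R] (c : R) (f : NCSeries n R) (w : List (Fin n)) :
    (c • f) w = c * f w := rfl

theorem mul_vanish {R : Type*} [CommRing R] {f g : NCSeries n R} {p q : ℕ}
    (hf : ∀ w : List (Fin n), w.length < p → f w = 0)
    (hg : ∀ w : List (Fin n), w.length < q → g w = 0) :
    ∀ w : List (Fin n), w.length < p + q → (f * g) w = 0 := by
  intro w hw
  rw [NCSeries.mul_def]
  refine Finset.sum_eq_zero fun j hj => ?_
  rw [Finset.mem_range] at hj
  by_cases h1 : (w.take j).length < p
  · rw [hf _ h1, zero_mul]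
  · rw [hg, mul_zero]
    rw [List.length_drop]
    rw [List.length_take] at h1
    omega

/-- The series `w ↦ x (i :: w)`. -/
def tail {R : Type*} [CommRing R] (i : Fin n) (x : NCSeries n R) : NCSeries n R :=
  fun u => x (i :: u)

theorem X_mul_nil {R : Type*} [CommRing R] (i : Fin n) (x : NCSeries n R) :
    (X i * x : NCSeries n R) [] = 0 := by
  rw [NCSeries.mul_def]
  simp [X]

theorem X_mul_cons {R : Type*} [CommRing R] (i a : Fin n) (t : List (Fin n))
    (x : NCSeries n R) :
    (X i * x : NCSeries n R) (a :: t) = if a = i then x t else 0 := by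
  rw [NCSeries.mul_def]
  rw [Finset.sum_eq_single_of_mem 1 (Finset.mem_range.2 (by simp))]
  · simp only [List.take_succ_cons, List.take_zero, List.drop_succ_cons, List.drop_zero, X]
    by_cases hai : a = i
    · subst hai; simp
    · simp [hai]
  · intro b hb hb1
    rw [Finset.mem_range] at hb
    simp only [List.length_cons] at hb
    have hne : (a :: t).take b ≠ [i] := by
      intro hcon
      have hlen := congrArg List.length hcon
      rw [List.length_take] at hlen
      simp only [List.length_cons, List.length_nil] at hlen
      omega
    simp only [X]
    rw [if_neg hne, zero_mul]

theorem decomp {R : Type*} [CommRing R] (x : NCSeries n R) (h0 : x [] = 0) :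
    x = ∑ i : Fin n, (X i * tail i x : NCSeries n R) := by
  funext w
  rw [sum_apply']
  cases w with
  | nil =>
    rw [h0]
    exact (Finset.sum_eq_zero fun i _ => X_mul_nil i _).symm
  | cons a t =>
    rw [Finset.sum_eq_single a
      (fun b _ hb => by rw [X_mul_cons, if_neg (fun h => hb h.symm)])
      (fun h => absurd (Finset.mem_univ a) h)]
    rw [X_mul_cons, if_pos rfl]
    rfl

theorem alpha_agree (α : NCSeries n ℝ →+* NCSeries n ℝ)
    (hFilt : ∀ (x : NCSeries n ℝ) (k : ℕ), (∀ w : List (Fin n), w.length < k → x w = 0) →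
      ∀ w : List (Fin n), w.length < k → α x w = 0)
    (hC : ∀ c : ℝ, α (c • (1 : NCSeries n ℝ)) = c • (1 : NCSeries n ℝ))
    (hX : ∀ i : Fin n, ∀ w : List (Fin n), w.length < 2 →
      (α (NCSeries.X i) - NCSeries.X i : NCSeries n ℝ) w = 0) :
    ∀ (k : ℕ) (x : NCSeries n ℝ), (∀ w : List (Fin n), w.length < k → x w = 0) →
      ∀ w : List (Fin n), w.length ≤ k → α x w = x w := by
  intro k
  induction k with
  | zero =>
    intro x _ w hw
    have hw0 : w = [] := List.length_eq_zero_iff.1 (Nat.le_zero.1 hw)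
    subst hw0
    have hy : ∀ w' : List (Fin n), w'.length < 1 → (x - x [] • 1) w' = 0 := by
      intro w' hw'
      have hnil : w' = [] := List.length_eq_zero_iff.1 (by omega)
      subst hnil
      rw [sub_def', smul_def', NCSeries.one_def, if_pos rfl, mul_one, sub_self]
    have h1 : α (x - x [] • 1) [] = 0 := hFilt _ 1 hy [] (by simp)
    have hsplit : x [] • (1 : NCSeries n ℝ) + (x - x [] • 1) = x := by abel
    calc α x [] = (α (x [] • 1) + α (x - x [] • 1)) [] := by rw [← map_add, hsplit]
    _ = α (x [] • 1) [] + α (x - x [] • 1) [] := rfl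
    _ = x [] := by
        rw [h1, add_zero, hC, smul_def', NCSeries.one_def, if_pos rfl, mul_one]
  | succ k ih =>
    intro x hx w hw
    have hx0 : x [] = 0 := hx [] (Nat.succ_pos k)
    have hdec := decomp x hx0
    have htv : ∀ i : Fin n, ∀ u : List (Fin n), u.length < k →
        tail i x u = 0 := by
      intro i u hu
      exact hx (i :: u) (by simp; omega)
    have hαx : α x = ∑ i : Fin n,
        (X i + (α (X i) - X i)) * α (tail i x) := by
      conv_lhs => rw [hdec]
      rw [map_sum]
      refine Finset.sum_congr rfl fun i _ => ?_
      rw [map_mul]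
      congr 1
      abel
    have step : ∀ i : Fin n,
        ((X i + (α (X i) - X i)) * α (tail i x) : NCSeries n ℝ) w
          = (X i * tail i x : NCSeries n ℝ) w := by
      intro i
      rw [add_mul, NCSeries.add_def]
      have hαt := hFilt (tail i x) k (htv i)
      have hr : ((α (X i) - X i) * α (tail i x) : NCSeries n ℝ) w = 0 :=
        mul_vanish (hX i) hαt w (by omega)
      rw [hr, add_zero]
      cases w with
      | nil => rw [X_mul_nil, X_mul_nil]
      | cons a u =>
        rw [X_mul_cons, X_mul_cons]
        by_cases hai : a = i
        · rw [if_pos hai, if_pos hai]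
          exact ih _ (htv i) u (by simp at hw; omega)
        · rw [if_neg hai, if_neg hai]
    rw [hαx, sum_apply', Finset.sum_congr rfl fun i _ => step i]
    conv_rhs => rw [hdec]
    rw [sum_apply']

theorem vanish_transfer (α : NCSeries n ℝ →+* NCSeries n ℝ)
    (hFilt : ∀ (x : NCSeries n ℝ) (k : ℕ), (∀ w : List (Fin n), w.length < k → x w = 0) →
      ∀ w : List (Fin n), w.length < k → α x w = 0)
    (hC : ∀ c : ℝ, α (c • (1 : NCSeries n ℝ)) = c • (1 : NCSeries n ℝ))
    (hX : ∀ i : Fin n, ∀ w : List (Fin n), w.length < 2 →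
      (α (NCSeries.X i) - NCSeries.X i : NCSeries n ℝ) w = 0)
    (d : NCSeries n ℝ) (k : ℕ)
    (h : ∀ w : List (Fin n), w.length < k → α d w = 0) :
    ∀ w : List (Fin n), w.length < k → d w = 0 := by
  suffices H : ∀ m, ∀ w : List (Fin n), w.length = m → w.length < k → d w = 0 from
    fun w hw => H w.length w rfl hw
  intro m
  induction m using Nat.strong_induction_on with
  | _ m ih =>
    intro w hm hk
    have hd : ∀ w' : List (Fin n), w'.length < w.length → d w' = 0 := fun w' hw' =>
      ih w'.length (by omega) w' rfl (by omega)
    rw [← alpha_agree α hFilt hC hX w.length d hd w le_rfl]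
    exact h w hk

end MagnusAux

/-- Let `μ, Θ : Fₙ → ℝ⟨⟨X₁,…,Xₙ⟩⟩` be injective homomorphisms
with `μ(xᵢ) = 1 + Xᵢ`, `Θ(xᵢ) = 1 + Xᵢ + (degree ≥ 2)`, and `Θ = α ∘ μ` for a
filtration-preserving algebra automorphism `α` with `α(Xᵢ) ≡ Xᵢ mod J²`.  Then
the total orders on `Fₙ` defined lexicographically from the DegLex-ordered
coefficient functions of `μ` and of `Θ` coincide. -/
theorem magnus_and_holonomy_orders_coincide (n : ℕ)
    (μ Θ : FreeGroup (Fin n) →* NCSeries n ℝ)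
    (hμ : ∀ i : Fin n, μ (FreeGroup.of i) = 1 + NCSeries.X i)
    (hμinj : Function.Injective μ) (hΘinj : Function.Injective Θ)
    (α : NCSeries n ℝ →+* NCSeries n ℝ)
    (hFilt : ∀ (x : NCSeries n ℝ) (k : ℕ), (∀ w : List (Fin n), w.length < k → x w = 0) →
      ∀ w : List (Fin n), w.length < k → α x w = 0)
    (hC : ∀ c : ℝ, α (c • (1 : NCSeries n ℝ)) = c • (1 : NCSeries n ℝ))
    (hX : ∀ i : Fin n, ∀ w : List (Fin n), w.length < 2 →
      (α (NCSeries.X i) - NCSeries.X i : NCSeries n ℝ) w = 0)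
    (hcomp : ∀ g : FreeGroup (Fin n), Θ g = α (μ g))
    (hΘi : ∀ i : Fin n, ∀ w : List (Fin n), w.length < 2 →
      Θ (FreeGroup.of i) w = (1 + NCSeries.X i : NCSeries n ℝ) w) :
    ∀ a b : FreeGroup (Fin n), coeffLt μ a b ↔ coeffLt Θ a b := by
  intro a b
  have hΘd : Θ b - Θ a = α (μ b - μ a) := by rw [map_sub, hcomp, hcomp]
  constructor
  · rintro ⟨w, hlt, heq⟩
    have hdvan : ∀ w' : List (Fin n), w'.length < w.length → (μ b - μ a) w' = 0 := by
      intro w' hw'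
      rw [MagnusAux.sub_def', heq w' (Or.inl hw'), sub_self]
    have hag := MagnusAux.alpha_agree α hFilt hC hX w.length (μ b - μ a) hdvan
    refine ⟨w, ?_, ?_⟩
    · have h1 := hag w le_rfl
      rw [← hΘd, MagnusAux.sub_def', MagnusAux.sub_def'] at h1
      linarith
    · intro w' hw'
      have hle : w'.length ≤ w.length := by
        rcases hw' with h | ⟨h, _⟩ <;> omega
      have h1 := hag w' hle
      rw [← hΘd, MagnusAux.sub_def', MagnusAux.sub_def'] at h1
      have h3 := heq w' hw'
      linarith
  · rintro ⟨w, hlt, heq⟩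
    have hαvan : ∀ w' : List (Fin n), w'.length < w.length → α (μ b - μ a) w' = 0 := by
      intro w' hw'
      rw [← hΘd, MagnusAux.sub_def', ← heq w' (Or.inl hw'), sub_self]
    have hdvan := MagnusAux.vanish_transfer α hFilt hC hX (μ b - μ a) w.length hαvan
    have hag := MagnusAux.alpha_agree α hFilt hC hX w.length (μ b - μ a) hdvan
    refine ⟨w, ?_, ?_⟩
    · have h1 := hag w le_rfl
      rw [← hΘd, MagnusAux.sub_def', MagnusAux.sub_def'] at h1
      linarith
    · intro w' hw'
      have hle : w'.length ≤ w.length := by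
        rcases hw' with h | ⟨h, _⟩ <;> omega
      have h1 := hag w' hle
      rw [← hΘd, MagnusAux.sub_def', MagnusAux.sub_def'] at h1
      have h3 := heq w' hw'
      linarith

end
end

section
/- Let 1 → H → G → K → 1 be a group extension in which the conjugation action of G on H preserves a given bi-ordering of H only up to the following nilpotent-type condition: H has a finite basis-indexed filtration such that each g ∈ G acts on the associated ordered data unitriangularly (g·vᵢ = vᵢ + linear combination of later basis vectors). Then the lexicographic product order built from a bi-ordering of K followed by the order on H determined by this triangular basis is a bi-ordering of G. -/
/-- Let `1 → H → G → K → 1` be a group extension with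
`H = ker p` an integral lattice in a real vector space with coordinates
`φ : H → ℝ^m` (so `φ` is additive and injective on `H`), and suppose the
conjugation action of `G` on `H` is unitriangular in these coordinates:
`φ(g h g⁻¹)ⱼ = φ(h)ⱼ + Σ_{i < j} a_{i,j} φ(h)ᵢ`.  Then the lexicographic
product order, built from a bi-ordering of `K` followed by the lexicographic
order on `H` given by this triangular basis, is a bi-ordering of `G`. -/
theorem quasi_nilpotent_extension_biordering {G K : Type*} [Group G] [Group K]
    (p : G →* K) (hsurj : Function.Surjective p)
    (rK : K → K → Prop) (hK : IsBiOrdering rK)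
    (m : ℕ) (φ : G → Fin m → ℝ)
    (hadd : ∀ h ∈ p.ker, ∀ h' ∈ p.ker, φ (h * h') = φ h + φ h')
    (hinj : ∀ h ∈ p.ker, ∀ h' ∈ p.ker, φ h = φ h' → h = h')
    (htriang : ∀ g : G, ∃ a : Fin m → Fin m → ℝ, ∀ h ∈ p.ker, ∀ j : Fin m,
      φ (g * h * g⁻¹) j = φ h j +
        ∑ i ∈ Finset.univ.filter (fun i : Fin m => i < j), a i j * φ h i) :
    IsBiOrdering (fun g g' : G => rK (p g) (p g') ∨ (p g = p g' ∧
      ∃ j : Fin m, 0 < φ (g⁻¹ * g') j ∧ ∀ j' : Fin m, j' < j → φ (g⁻¹ * g') j' = 0)) := by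
  have hφ1 : φ (1 : G) = 0 := by
    have h := hadd 1 (one_mem _) 1 (one_mem _)
    rw [mul_one] at h
    exact (left_eq_add.mp h)
  have hφinv : ∀ h ∈ p.ker, φ h⁻¹ = -φ h := by
    intro h hh
    have e := hadd h hh h⁻¹ (inv_mem hh)
    rw [mul_inv_cancel, hφ1] at e
    exact eq_neg_of_add_eq_zero_right e.symm
  set L : G → Prop := fun h => ∃ j : Fin m, 0 < φ h j ∧ ∀ j' : Fin m, j' < j → φ h j' = 0
    with hLdef
  -- positivity is closed under products in the kernel
  have Ladd : ∀ h ∈ p.ker, ∀ h' ∈ p.ker, L h → L h' → L (h * h') := by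
    rintro h hh h' hh' ⟨j1, hj1, hz1⟩ ⟨j2, hj2, hz2⟩
    have hsum : φ (h * h') = φ h + φ h' := hadd h hh h' hh'
    refine ⟨min j1 j2, ?_, ?_⟩
    · rw [hsum]
      rcases lt_trichotomy j1 j2 with hlt | heq | hgt
      · have : φ h' (min j1 j2) = 0 := by
          rw [min_eq_left hlt.le]; exact hz2 j1 hlt
        have h1 : 0 < φ h (min j1 j2) := by rw [min_eq_left hlt.le]; exact hj1
        simp only [Pi.add_apply, this, add_zero]; exact h1
      · subst heq
        simp only [min_self, Pi.add_apply]; linarith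
      · have : φ h (min j1 j2) = 0 := by
          rw [min_eq_right hgt.le]; exact hz1 j2 hgt
        have h2 : 0 < φ h' (min j1 j2) := by rw [min_eq_right hgt.le]; exact hj2
        simp only [Pi.add_apply, this, zero_add]; exact h2
    · intro j' hj'
      rw [hsum]
      have e1 : φ h j' = 0 := hz1 j' (lt_of_lt_of_le hj' (min_le_left _ _))
      have e2 : φ h' j' = 0 := hz2 j' (lt_of_lt_of_le hj' (min_le_right _ _))
      simp [e1, e2]
  -- positivity is preserved by conjugation (unitriangularity)
  have Lconj : ∀ g : G, ∀ h ∈ p.ker, L h → L (g * h * g⁻¹) := by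
    rintro g h hh ⟨j, hj, hz⟩
    obtain ⟨a, ha⟩ := htriang g
    have key : ∀ j' : Fin m, j' ≤ j → φ (g * h * g⁻¹) j' = φ h j' := by
      intro j' hj'
      rw [ha h hh j']
      have hzero : ∑ i ∈ Finset.univ.filter (fun i : Fin m => i < j'),
          a i j' * φ h i = 0 := by
        refine Finset.sum_eq_zero fun i hi => ?_
        rw [Finset.mem_filter] at hi
        rw [hz i (lt_of_lt_of_le hi.2 hj'), mul_zero]
      rw [hzero, add_zero]
    exact ⟨j, by rw [key j le_rfl]; exact hj,
      fun j' hj' => by rw [key j' hj'.le]; exact hz j' hj'⟩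
  -- trichotomy in the kernel
  have Ltri : ∀ h ∈ p.ker, h ≠ 1 → L h ∨ L h⁻¹ := by
    intro h hh hne
    have hφne : φ h ≠ 0 := by
      intro hc
      exact hne (hinj h hh 1 (one_mem _) (by rw [hc, hφ1]))
    have hex : ∃ j : Fin m, φ h j ≠ 0 := by
      by_contra hc; push_neg at hc; exact hφne (funext hc)
    obtain ⟨j0, hj0⟩ := hex
    obtain ⟨j, hjmem, hjmin⟩ := Finset.exists_min_image
      (Finset.univ.filter fun j : Fin m => φ h j ≠ 0) id
      ⟨j0, by simp [hj0]⟩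
    rw [Finset.mem_filter] at hjmem
    have hzlt : ∀ j' : Fin m, j' < j → φ h j' = 0 := by
      intro j' hj'
      by_contra hc
      have := hjmin j' (by simp [hc])
      simp only [id] at this
      exact absurd hj' (not_lt.mpr this)
    rcases lt_trichotomy (φ h j) 0 with hneg | hzero | hpos
    · right
      refine ⟨j, ?_, ?_⟩
      · rw [hφinv h hh]; simpa using hneg
      · intro j' hj'
        rw [hφinv h hh]; simp [hzlt j' hj']
    · exact absurd hzero hjmem.2
    · exact Or.inl ⟨j, hpos, hzlt⟩
  have kermem : ∀ g g' : G, p g = p g' → g⁻¹ * g' ∈ p.ker := by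
    intro g g' he
    rw [MonoidHom.mem_ker, map_mul, map_inv, he, inv_mul_cancel]
  constructor
  · refine { trichotomous := ?_, irrefl := ?_, trans := ?_ }
    · -- trichotomous
      intro g g' hn1 hn2
      refine ((?_ : _ ∨ g = g' ∨ _).resolve_left hn1).resolve_right hn2
      have tK : rK (p g) (p g') ∨ p g = p g' ∨ rK (p g') (p g) := by
        by_cases ha : rK (p g) (p g')
        · exact Or.inl ha
        · by_cases hb : rK (p g') (p g)
          · exact Or.inr (Or.inr hb)
          · exact Or.inr (Or.inl (hK.1.trichotomous _ _ ha hb))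
      rcases tK with hlt | heq | hgt
      · exact Or.inl (Or.inl hlt)
      · by_cases hgg : g = g'
        · exact Or.inr (Or.inl hgg)
        · have hk := kermem g g' heq
          have hne : g⁻¹ * g' ≠ 1 := by
            intro hc
            exact hgg (by rw [← mul_one g, ← hc, ← mul_assoc, mul_inv_cancel, one_mul])
          rcases Ltri _ hk hne with hL | hL
          · exact Or.inl (Or.inr ⟨heq, hL⟩)
          · refine Or.inr (Or.inr (Or.inr ⟨heq.symm, ?_⟩))
            rw [show g'⁻¹ * g = (g⁻¹ * g')⁻¹ by group]
            exact hL
      · exact Or.inr (Or.inr (Or.inl hgt))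
    · -- irreflexive
      intro g hg
      rcases hg with h | ⟨_, j, hj, _⟩
      · exact hK.1.irrefl _ h
      · rw [inv_mul_cancel] at hj
        rw [hφ1] at hj
        exact lt_irrefl (0:ℝ) (by simpa using hj)
    · -- transitive
      intro a b c hab hbc
      rcases hab with h1 | ⟨he1, hL1⟩ <;> rcases hbc with h2 | ⟨he2, hL2⟩
      · exact Or.inl (hK.1.trans _ _ _ h1 h2)
      · exact Or.inl (he2 ▸ h1)
      · exact Or.inl (he1 ▸ h2)
      · refine Or.inr ⟨he1.trans he2, ?_⟩
        have e : a⁻¹ * c = (a⁻¹ * b) * (b⁻¹ * c) := by group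
        rw [e]
        exact Ladd _ (kermem a b he1) _ (kermem b c he2) hL1 hL2
  · -- invariance
    intro a b c hab
    rcases hab with h | ⟨he, hL⟩
    · constructor
      · exact Or.inl (by rw [map_mul, map_mul]; exact (hK.2 _ _ _ h).1)
      · exact Or.inl (by rw [map_mul, map_mul]; exact (hK.2 _ _ _ h).2)
    · constructor
      · refine Or.inr ⟨by rw [map_mul, map_mul, he], ?_⟩
        rw [show (c * a)⁻¹ * (c * b) = a⁻¹ * b by group]
        exact hL
      · refine Or.inr ⟨by rw [map_mul, map_mul, he], ?_⟩
        rw [show (a * c)⁻¹ * (b * c) = c⁻¹ * (a⁻¹ * b) * (c⁻¹)⁻¹ by group]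
        exact Lconj c⁻¹ _ (kermem a b he) hL
end
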